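/- arXiv:1403.5822 — 7 statements merged into one kernel-verified Lean document; each statement's English description precedes it below -/
import Mathlib

section
/- Define, for a real parameter p > 0 and integers 0 ≤ i,j ≤ n, u_{ij} = Σ_{k=i}^{n} Σ_{l=n-j}^{k} s(k,l)·(-1)^{n-j-l} / (k!·p^l) · binom(l, n-j) · binom(n-i, n-k), and v_{ij} = Σ_{r=0}^{j} (-1)^r · binom(n+1, r) · (p(j-r)+1)^{n-i}. Then for all 0 ≤ i,j ≤ n, Σ_{m=0}^{n} u_{im} · v_{mj} = δ_{ij}, i.e., the matrices U = (u_{ij}) and V = (v_{ij}) satisfy UV = Id. -/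
/-- The signed Stirling number of the first kind. -/
noncomputable def stirlingFirst (n k : ℕ) : ℤ := (descPochhammer ℤ n).coeff k

/-- `u^{(p)}_{ij}(n) = Σ_{k=i}^{n} Σ_{l=n-j}^{k}
  s(k,l)·(-1)^{n-j-l}/(k!·p^l) · binom(l,n-j) · binom(n-i,n-k)`. -/
noncomputable def uMat (p : ℝ) (n i j : ℕ) : ℝ :=
  ∑ k ∈ Finset.Icc i n, ∑ l ∈ Finset.Icc (n - j) k,
    (stirlingFirst k l : ℝ) * (-1 : ℝ) ^ ((n : ℤ) - j - l) / ((Nat.factorial k : ℝ) * p ^ l)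
      * (l.choose (n - j)) * ((n - i).choose (n - k))

/-- `v^{(p)}_{ij}(n) = Σ_{r=0}^{j} (-1)^r·binom(n+1,r)·(p(j-r)+1)^{n-i}`. -/
noncomputable def vMat (p : ℝ) (n i j : ℕ) : ℝ :=
  ∑ r ∈ Finset.range (j + 1),
    (-1 : ℝ) ^ r * ((n + 1).choose r : ℝ) * (p * ((j : ℝ) - r) + 1) ^ (n - i)

section Aux
open Finset Polynomial

/-- coefficient of (1-X)^m -/
lemma coeff_one_sub_X_pow (m a : ℕ) :
    ((1 - X : Polynomial ℤ) ^ m).coeff a = (-1) ^ a * m.choose a := by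
  induction m generalizing a with
  | zero => cases a <;> simp [Polynomial.coeff_one]
  | succ m ih =>
    have h : (1 - X : Polynomial ℤ) ^ (m+1) = (1 - X)^m - (1 - X)^m * X := by ring
    rw [h, Polynomial.coeff_sub]
    cases a with
    | zero => simp [ih]
    | succ a =>
      rw [Polynomial.coeff_mul_X, ih, ih, Nat.choose_succ_succ']
      push_cast
      ring

lemma coeff_one_sub_X_pow_ps (m a : ℕ) :
    (PowerSeries.coeff a) ((1 - PowerSeries.X : PowerSeries ℤ) ^ m) = (-1) ^ a * m.choose a := by
  have : ((1 - X : Polynomial ℤ) ^ m : Polynomial ℤ) = ((1 - X : Polynomial ℤ))^m := rfl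
  have h2 : (((1 - X : Polynomial ℤ)^m : Polynomial ℤ) : PowerSeries ℤ)
      = (1 - PowerSeries.X : PowerSeries ℤ) ^ m := by
    push_cast
    simp
  rw [← h2, Polynomial.coeff_coe, coeff_one_sub_X_pow]

/-- Identity A: `Σ_{r=0}^{j} (-1)^r C(n+1,r) C(j-r,k) = (-1)^{j-k} C(n-k,j-k)` for `k ≤ j`,
and `0` for `k > j`. -/
lemma identA (n j k : ℕ) (hk : k ≤ n) :
    ∑ r ∈ Finset.range (j+1), (-1:ℤ)^r * ((n+1).choose r) * ((j - r).choose k) =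
      if k ≤ j then (-1:ℤ)^(j-k) * ((n-k).choose (j-k)) else 0 := by
  by_cases hkj : k ≤ j
  · rw [if_pos hkj]
    -- power series identity: (1-X)^(n+1) * mk (C(k+·,k)) = (1-X)^(n-k)
    have key : ((1 - PowerSeries.X : PowerSeries ℤ) ^ (n+1)) *
        (PowerSeries.mk fun b => ((k + b).choose k : ℤ)) =
        (1 - PowerSeries.X : PowerSeries ℤ) ^ (n - k) := by
      have hsplit : (1 - PowerSeries.X : PowerSeries ℤ) ^ (n+1)
          = (1 - PowerSeries.X) ^ (n - k) * (1 - PowerSeries.X) ^ (k+1) := by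
        rw [← pow_add]
        congr 1
        omega
      rw [hsplit, mul_assoc, mul_comm ((1 - PowerSeries.X : PowerSeries ℤ) ^ (k+1)),
        PowerSeries.mk_add_choose_mul_one_sub_pow_eq_one, mul_one]
    have hc := congrArg (PowerSeries.coeff (j - k)) key
    rw [PowerSeries.coeff_mul, coeff_one_sub_X_pow_ps] at hc
    simp only [coeff_one_sub_X_pow_ps, PowerSeries.coeff_mk] at hc
    -- rewrite the antidiagonal sum as a range sum
    rw [Finset.Nat.sum_antidiagonal_eq_sum_range_succ
      (f := fun a b => (-1:ℤ)^a * ((n+1).choose a) * ((k + b).choose k))] at hc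
    -- now match with our sum: drop zero terms from range (j+1) down to range (j-k+1)
    rw [← hc, ← Finset.sum_subset (Finset.range_subset_range.2 (by omega : j - k + 1 ≤ j + 1))
      (fun r hr hr2 => by
        rw [Finset.mem_range] at hr hr2
        rw [Nat.choose_eq_zero_of_lt (by omega : j - r < k)]
        simp)]
    apply Finset.sum_congr (by rw [Nat.succ_eq_add_one])
    intro r hr
    rw [Finset.mem_range] at hr
    have h3 : k + (j - k - r) = j - r := by omega
    rw [h3]
  · rw [if_neg hkj]
    apply Finset.sum_eq_zero
    intro r hr
    rw [Nat.choose_eq_zero_of_lt (by omega : j - r < k)]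
    simp

/-- Identity B: binomial orthogonality. -/
lemma identB (n i j : ℕ) (hi : i ≤ n) (hj : j ≤ n) :
    ∑ k ∈ Finset.Icc i n, ((n-i).choose (n-k) : ℤ) *
      (if k ≤ j then (-1:ℤ)^(j-k) * ((n-k).choose (j-k)) else 0) =
      if i = j then 1 else 0 := by
  by_cases hij : i ≤ j
  · -- restrict the sum to Icc i j
    rw [← Finset.sum_subset (Finset.Icc_subset_Icc_right hj)
      (fun k hk hk2 => by
        rw [Finset.mem_Icc] at hk hk2
        rw [if_neg (by omega : ¬ k ≤ j), mul_zero])]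
    have hstep : ∀ k ∈ Finset.Icc i j,
        ((n-i).choose (n-k) : ℤ) * (if k ≤ j then (-1:ℤ)^(j-k) * ((n-k).choose (j-k)) else 0)
        = ((n-i).choose (n-j) : ℤ) * ((-1:ℤ)^(j-k) * ((j-i).choose (j-k))) := by
      intro k hk
      rw [Finset.mem_Icc] at hk
      rw [if_pos hk.2]
      have h1 : ((n-k).choose (j-k)) = ((n-k).choose (n-j)) := by
        rw [← Nat.choose_symm (by omega : n-j ≤ n-k)]
        congr 1
        omega
      have h2 : (n-i).choose (n-k) * ((n-k).choose (n-j)) =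
          (n-i).choose (n-j) * ((n-i)-(n-j)).choose ((n-k)-(n-j)) :=
        Nat.choose_mul (by omega)
      have h3 : ((n-i)-(n-j)) = j - i := by omega
      have h4 : ((n-k)-(n-j)) = j - k := by omega
      rw [h1]
      rw [h3, h4] at h2
      have h5 : (((n-i).choose (n-k) : ℤ)) * ((n-k).choose (n-j))
          = (((n-i).choose (n-j) : ℤ)) * ((j-i).choose (j-k)) := by exact_mod_cast h2
      linear_combination ((-1:ℤ)^(j-k)) * h5
    rw [Finset.sum_congr rfl hstep, ← Finset.mul_sum]
    have hre : ∑ k ∈ Finset.Icc i j, ((-1:ℤ)^(j-k) * ((j-i).choose (j-k)))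
        = ∑ t ∈ Finset.range (j-i+1), ((-1:ℤ)^t * ((j-i).choose t)) := by
      apply Finset.sum_nbij' (fun k => j - k) (fun t => j - t)
      · intro k hk; rw [Finset.mem_Icc] at hk; rw [Finset.mem_range]; omega
      · intro t ht; rw [Finset.mem_range] at ht; rw [Finset.mem_Icc]; omega
      · intro k hk; rw [Finset.mem_Icc] at hk; omega
      · intro t ht; rw [Finset.mem_range] at ht; omega
      · intro k hk; rfl
    rw [hre, Int.alternating_sum_range_choose]
    by_cases hij2 : i = j
    · simp [hij2]
    · rw [if_neg (by omega : ¬ j - i = 0), if_neg hij2, mul_zero]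
  · rw [if_neg (by omega : ¬ i = j)]
    apply Finset.sum_eq_zero
    intro k hk
    rw [Finset.mem_Icc] at hk
    rw [if_neg (by omega : ¬ k ≤ j), mul_zero]

/-- `(-1)^(a - b - c) = (-1)^(a+b+c)` (zpow vs pow). -/
lemma zsign (a b c : ℕ) : (-1:ℝ)^((a:ℤ) - b - c) = (-1:ℝ)^(a+b+c) := by
  have h : ((a:ℤ) - b - c) = ((a+b+c : ℕ) : ℤ) - 2*((b:ℤ)+c) := by push_cast; ring
  rw [h, zpow_sub₀ (by norm_num : (-1:ℝ) ≠ 0), zpow_natCast]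
  have h2 : (-1:ℝ)^(2*((b:ℤ)+c)) = 1 := by
    rw [zpow_mul]
    norm_num
  rw [h2, div_one]

/-- the inner sum over `m`. -/
lemma sum_m (n l : ℕ) (hl : l ≤ n) (x : ℝ) :
    ∑ m ∈ Finset.range (n+1), (-1:ℝ)^(n+m+l) * (l.choose (n-m)) * x^(n-m) = (x - 1)^l := by
  have h1 : ∑ m ∈ Finset.range (n+1), (-1:ℝ)^(n+m+l) * (l.choose (n-m)) * x^(n-m)
      = ∑ t ∈ Finset.range (n+1), (-1:ℝ)^(t+l) * (l.choose t) * x^t := by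
    apply Finset.sum_nbij' (fun m => n - m) (fun t => n - t)
    · intro m hm; rw [Finset.mem_range] at hm ⊢; omega
    · intro t ht; rw [Finset.mem_range] at ht ⊢; omega
    · intro m hm; rw [Finset.mem_range] at hm; omega
    · intro t ht; rw [Finset.mem_range] at ht; omega
    · intro m hm
      rw [Finset.mem_range] at hm
      have hs : (-1:ℝ)^(n+m+l) = (-1:ℝ)^((n-m)+l) := by
        have h : n+m+l = ((n-m)+l) + 2*m := by omega
        rw [h, pow_add, pow_mul, neg_one_sq, one_pow, mul_one]
      rw [hs]
  rw [h1, ← Finset.sum_subset (Finset.range_subset_range.2 (by omega : l + 1 ≤ n + 1))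
    (fun t ht ht2 => by
      rw [Finset.mem_range] at ht ht2
      rw [Nat.choose_eq_zero_of_lt (by omega : l < t)]
      simp)]
  rw [sub_pow x 1 l]
  apply Finset.sum_congr rfl
  intro t ht
  rw [one_pow]
  ring

/-- the Stirling sum: `Σ_l s(k,l) q^l = k! C(q,k)`. -/
lemma sum_stirling (k q : ℕ) :
    ∑ l ∈ Finset.range (k+1), (stirlingFirst k l : ℝ) * (q:ℝ)^l
      = (k.factorial : ℝ) * (q.choose k) := by
  have hmap : (descPochhammer ℤ k).map (Int.castRingHom ℝ) = descPochhammer ℝ k :=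
    descPochhammer_map (Int.castRingHom ℝ) k
  have hdeg : (descPochhammer ℝ k).natDegree = k := descPochhammer_natDegree ℝ k
  have heval := Polynomial.eval_eq_sum_range (p := descPochhammer ℝ k) (x := (q:ℝ))
  rw [hdeg] at heval
  have hcoeff : ∀ l, (descPochhammer ℝ k).coeff l = (stirlingFirst k l : ℝ) := by
    intro l
    rw [← hmap, Polynomial.coeff_map]
    rfl
  rw [descPochhammer_eval_eq_descFactorial ℝ q k] at heval
  have : ∑ l ∈ Finset.range (k+1), (stirlingFirst k l : ℝ) * (q:ℝ)^l
      = ((q.descFactorial k : ℕ) : ℝ) := by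
    rw [heval]
    apply Finset.sum_congr rfl
    intro l _
    rw [hcoeff]
  rw [this, Nat.descFactorial_eq_factorial_mul_choose]
  push_cast
  ring

/-- reorder four nested sums from `(m,r,k,l)` to `(k,l,r,m)`. -/
lemma reorder4 {M : Type*} [AddCommMonoid M] (s1 s2 s3 : Finset ℕ) (t : ℕ → Finset ℕ)
    (T : ℕ → ℕ → ℕ → ℕ → M) :
    ∑ m ∈ s1, ∑ r ∈ s2, ∑ k ∈ s3, ∑ l ∈ t k, T m r k l
      = ∑ k ∈ s3, ∑ l ∈ t k, ∑ r ∈ s2, ∑ m ∈ s1, T m r k l :=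
  calc ∑ m ∈ s1, ∑ r ∈ s2, ∑ k ∈ s3, ∑ l ∈ t k, T m r k l
      = ∑ m ∈ s1, ∑ k ∈ s3, ∑ r ∈ s2, ∑ l ∈ t k, T m r k l :=
        Finset.sum_congr rfl (fun m _ => Finset.sum_comm)
    _ = ∑ k ∈ s3, ∑ m ∈ s1, ∑ r ∈ s2, ∑ l ∈ t k, T m r k l := Finset.sum_comm
    _ = ∑ k ∈ s3, ∑ m ∈ s1, ∑ l ∈ t k, ∑ r ∈ s2, T m r k l :=
        Finset.sum_congr rfl (fun k _ => Finset.sum_congr rfl (fun m _ => Finset.sum_comm))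
    _ = ∑ k ∈ s3, ∑ l ∈ t k, ∑ m ∈ s1, ∑ r ∈ s2, T m r k l :=
        Finset.sum_congr rfl (fun k _ => Finset.sum_comm)
    _ = ∑ k ∈ s3, ∑ l ∈ t k, ∑ r ∈ s2, ∑ m ∈ s1, T m r k l :=
        Finset.sum_congr rfl (fun k _ => Finset.sum_congr rfl (fun l _ => Finset.sum_comm))

end Aux

set_option maxHeartbeats 1000000 in
/-- the matrices `U = (u_{ij})` and `V = (v_{ij})` satisfy `UV = Id`:
`Σ_{m=0}^{n} u_{im}·v_{mj} = δ_{ij}` for all `0 ≤ i, j ≤ n`. -/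
theorem uMat_mul_vMat_eq_delta (p : ℝ) (hp : 0 < p) (n i j : ℕ) (hi : i ≤ n) (hj : j ≤ n) :
    ∑ m ∈ Finset.range (n + 1), uMat p n i m * vMat p n m j =
      if i = j then 1 else 0 := by
  have hp0 : p ≠ 0 := ne_of_gt hp
  -- normalize `uMat`: extend the `l`-sum and convert the sign to a natural power
  have hu : ∀ m, uMat p n i m = ∑ k ∈ Finset.Icc i n, ∑ l ∈ Finset.range (k+1),
      (stirlingFirst k l : ℝ) * (-1:ℝ)^(n+m+l) / ((Nat.factorial k : ℝ) * p ^ l)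
        * (l.choose (n-m)) * (((n-i).choose (n-k) : ℕ) : ℝ) := by
    intro m
    unfold uMat
    apply Finset.sum_congr rfl
    intro k hk
    refine (Finset.sum_subset (fun l hl => ?_) (fun l hl hl2 => ?_)).trans
      (Finset.sum_congr rfl (fun l _ => by rw [zsign]))
    · rw [Finset.mem_Icc] at hl; rw [Finset.mem_range]; omega
    · rw [Finset.mem_range] at hl
      rw [Finset.mem_Icc] at hl2
      rw [Nat.choose_eq_zero_of_lt (by omega : l < n - m)]
      simp
  calc ∑ m ∈ Finset.range (n + 1), uMat p n i m * vMat p n m j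
      = ∑ k ∈ Finset.Icc i n, ∑ l ∈ Finset.range (k+1), ∑ r ∈ Finset.range (j+1),
          ∑ m ∈ Finset.range (n+1),
          ((stirlingFirst k l : ℝ) * (-1:ℝ)^(n+m+l) / ((Nat.factorial k : ℝ) * p ^ l)
            * (l.choose (n-m)) * (((n-i).choose (n-k) : ℕ) : ℝ))
          * ((-1:ℝ)^r * (((n+1).choose r : ℕ) : ℝ) * (p * ((j:ℝ) - r) + 1)^(n-m)) := by
        simp only [hu]
        unfold vMat
        simp only [Finset.sum_mul, Finset.mul_sum]
        exact reorder4 (Finset.range (n+1)) (Finset.range (j+1)) (Finset.Icc i n)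
          (fun k => Finset.range (k+1)) (fun m r k l =>
            ((stirlingFirst k l : ℝ) * (-1:ℝ)^(n+m+l) / ((Nat.factorial k : ℝ) * p ^ l)
              * (l.choose (n-m)) * (((n-i).choose (n-k) : ℕ) : ℝ))
            * ((-1:ℝ)^r * (((n+1).choose r : ℕ) : ℝ) * (p * ((j:ℝ) - r) + 1)^(n-m)))
    _ = ∑ k ∈ Finset.Icc i n, ∑ r ∈ Finset.range (j+1),
          (((n-i).choose (n-k) : ℕ) : ℝ)
            * ((-1:ℝ)^r * (((n+1).choose r : ℕ) : ℝ) * (((j-r).choose k : ℕ) : ℝ)) := by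
        apply Finset.sum_congr rfl
        intro k hk
        rw [Finset.mem_Icc] at hk
        rw [Finset.sum_comm]
        apply Finset.sum_congr rfl
        intro r hr
        rw [Finset.mem_range] at hr
        -- inner double sum over l, m
        have step2 : ∀ l ∈ Finset.range (k+1),
            ∑ m ∈ Finset.range (n+1),
              ((stirlingFirst k l : ℝ) * (-1:ℝ)^(n+m+l) / ((Nat.factorial k : ℝ) * p ^ l)
                * (l.choose (n-m)) * (((n-i).choose (n-k) : ℕ) : ℝ))
              * ((-1:ℝ)^r * (((n+1).choose r : ℕ) : ℝ) * (p * ((j:ℝ) - r) + 1)^(n-m))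
            = ((stirlingFirst k l : ℝ) * (((j - r : ℕ) : ℝ))^l) *
                ((((n-i).choose (n-k) : ℕ) : ℝ) * ((-1:ℝ)^r * (((n+1).choose r : ℕ) : ℝ))
                  / (Nat.factorial k : ℝ)) := by
          intro l hl
          rw [Finset.mem_range] at hl
          have hfac : ∀ m, ((stirlingFirst k l : ℝ) * (-1:ℝ)^(n+m+l)
                / ((Nat.factorial k : ℝ) * p ^ l)
                * (l.choose (n-m)) * (((n-i).choose (n-k) : ℕ) : ℝ))
              * ((-1:ℝ)^r * (((n+1).choose r : ℕ) : ℝ) * (p * ((j:ℝ) - r) + 1)^(n-m))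
              = ((stirlingFirst k l : ℝ) / ((Nat.factorial k : ℝ) * p ^ l)
                  * (((n-i).choose (n-k) : ℕ) : ℝ)
                  * ((-1:ℝ)^r * (((n+1).choose r : ℕ) : ℝ)))
                * ((-1:ℝ)^(n+m+l) * (l.choose (n-m)) * (p * ((j:ℝ) - r) + 1)^(n-m)) := by
            intro m; ring
          rw [Finset.sum_congr rfl (fun m _ => hfac m), ← Finset.mul_sum,
            sum_m n l (by omega) (p * ((j:ℝ) - r) + 1)]
          have hx : (p * ((j:ℝ) - r) + 1 - 1) = p * (((j - r : ℕ) : ℝ)) := by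
            rw [Nat.cast_sub (by omega : r ≤ j)]
            ring
          rw [hx, mul_pow]
          have hkf : (Nat.factorial k : ℝ) ≠ 0 := by positivity
          have hpl : p ^ l ≠ 0 := pow_ne_zero _ hp0
          field_simp
        rw [Finset.sum_congr rfl step2, ← Finset.sum_mul,
          sum_stirling k (j - r)]
        have hkf : (Nat.factorial k : ℝ) ≠ 0 := by positivity
        field_simp
    _ = ((∑ k ∈ Finset.Icc i n, ((n-i).choose (n-k) : ℤ) *
          ∑ r ∈ Finset.range (j+1), (-1:ℤ)^r * ((n+1).choose r) * ((j-r).choose k) : ℤ) : ℝ) := by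
        push_cast
        apply Finset.sum_congr rfl
        intro k _
        rw [Finset.mul_sum]
    _ = if i = j then 1 else 0 := by
        have hZ : (∑ k ∈ Finset.Icc i n, ((n-i).choose (n-k) : ℤ) *
            ∑ r ∈ Finset.range (j+1), (-1:ℤ)^r * ((n+1).choose r) * ((j-r).choose k))
            = if i = j then 1 else 0 := by
          exact (Finset.sum_congr rfl (fun k hk => by
            rw [Finset.mem_Icc] at hk
            rw [identA n j k hk.2])).trans (identB n i j hi hj)
        rw [hZ]
        split <;> norm_num
end

section
/- Let p be a positive real number and define v_{i,j}(n) = Σ_{r=0}^{j} (-1)^r · binom(n+1, r) · (p(j-r)+1)^{n-i} for 0 ≤ i,j ≤ n. Then the recursion v_{i,j}(n) = (pj+1)·v_{i,j}(n-1) + (p(n+1-j)-1)·v_{i,j-1}(n-1) holds for 1 ≤ j ≤ n-1 and 0 ≤ i ≤ n-1. -/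
/-- the recursion
`v_{i,j}(n) = (pj+1)·v_{i,j}(n-1) + (p(n+1-j)-1)·v_{i,j-1}(n-1)`
for `1 ≤ j ≤ n-1` and `0 ≤ i ≤ n-1`. -/
theorem vMat_recursion (p : ℝ) (hp : 0 < p) (n i j : ℕ)
    (hn : 1 ≤ n) (hj1 : 1 ≤ j) (hj2 : j ≤ n - 1) (hi : i ≤ n - 1) :
    vMat p n i j =
      (p * j + 1) * vMat p (n - 1) i j
        + (p * ((n : ℝ) + 1 - j) - 1) * vMat p (n - 1) i (j - 1) := by
  obtain ⟨m, rfl⟩ : ∃ m, n = m + 1 := ⟨n - 1, (Nat.succ_pred_eq_of_pos hn).symm⟩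
  obtain ⟨t, rfl⟩ : ∃ t, j = t + 1 := ⟨j - 1, (Nat.succ_pred_eq_of_pos hj1).symm⟩
  simp only [Nat.add_sub_cancel] at hj2 hi ⊢
  unfold vMat
  rw [Nat.succ_sub hi]
  rw [Finset.mul_sum, ← sub_eq_iff_eq_add', ← Finset.sum_sub_distrib,
    Finset.sum_range_succ', Finset.mul_sum]
  simp only [Nat.succ_eq_add_one, pow_succ, pow_zero, Nat.choose_zero_right,
    Nat.cast_one, one_mul, Nat.cast_zero, sub_zero]
  push_cast
  have hz : ∀ X : ℝ, X ^ (m - i) * X - X * X ^ (m - i) = 0 := fun X => by ring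
  rw [hz, add_zero]
  refine Finset.sum_congr rfl fun r hr => ?_
  have hrm : r ≤ m + 1 := by
    have := Finset.mem_range.mp hr; omega
  have hc1 : (((m + 1 + 1).choose (r + 1) : ℕ) : ℝ)
      = ((m + 1).choose r : ℕ) + ((m + 1).choose (r + 1) : ℕ) := by
    rw [Nat.choose_succ_succ]; push_cast; ring
  have hc2 : (((m + 1).choose (r + 1) : ℕ) : ℝ) * ((r : ℝ) + 1)
      = (((m + 1).choose r : ℕ) : ℝ) * ((m : ℝ) + 1 - r) := by
    have h := Nat.choose_succ_right_eq (m + 1) r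
    have h' : ((((m + 1).choose (r + 1)) * (r + 1) : ℕ) : ℝ)
        = ((((m + 1).choose r) * (m + 1 - r) : ℕ) : ℝ) := by
      exact_mod_cast congrArg (fun x : ℕ => (x : ℝ)) h
    push_cast [Nat.cast_sub hrm] at h'
    linarith
  linear_combination (-(-1 : ℝ) ^ r * (p * ((t : ℝ) - r) + 1) ^ (m - i) * (p * ((t : ℝ) - r) + 1)) * hc1
    + ((-1 : ℝ) ^ r * (p * ((t : ℝ) - r) + 1) ^ (m - i) * p) * hc2
end

section
/- Let p, p* be real numbers with 1/p + 1/p* = 1 and p,p* ≠ 0, and define v^{(p)}_{i,j}(n) = Σ_{r=0}^{j} (-1)^r · binom(n+1,r) · (p(j-r)+1)^{n-i}. Then the duality v^{(p*)}_{i,j}(n) = (-1)^i · (p*/p)^{n-i} · v^{(p)}_{i,n-j}(n) holds for 0 ≤ i,j ≤ n. -/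
open Finset fwdDiff

lemma neg_one_pow_sub_real' (m k : ℕ) (h : k ≤ m) : (-1:ℝ)^(m-k) = (-1)^m * (-1)^k := by
  have h1 : (-1:ℝ)^(m-k) * (-1)^k = (-1)^m := by rw [← pow_add, Nat.sub_add_cancel h]
  have h2 : (-1:ℝ)^k * (-1)^k = 1 := by rw [← pow_add, ← two_mul, pow_mul]; norm_num
  calc (-1:ℝ)^(m-k) = (-1)^(m-k) * ((-1)^k * (-1)^k) := by rw [h2, mul_one]
    _ = (-1)^m * (-1)^k := by rw [← mul_assoc, h1]

lemma fwdDiff_affine_pow (a : ℝ) : ∀ d : ℕ, ∀ b : ℝ, ∀ m : ℕ, d < m →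
    (fwdDiff (1:ℝ))^[m] (fun x : ℝ ↦ (a*x+b)^d) = 0 := by
  intro d
  induction d using Nat.strong_induction_on with
  | _ d IH =>
    intro b m hm
    obtain ⟨m', rfl⟩ : ∃ m', m = m' + 1 := ⟨m - 1, by omega⟩
    rw [Function.iterate_succ_apply]
    have hΔ : (fwdDiff (1:ℝ)) (fun x : ℝ ↦ (a*x+b)^d)
        = ∑ t ∈ Finset.range d, ((d.choose t : ℝ) * a^(d-t)) • (fun x : ℝ ↦ (a*x+b)^t) := by
      funext x
      simp only [fwdDiff, Finset.sum_apply, Pi.smul_apply, smul_eq_mul]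
      have h1 : a*(x+1)+b = (a*x+b) + a := by ring
      rw [h1, add_pow, Finset.sum_range_succ, Nat.sub_self, pow_zero, Nat.choose_self,
        Nat.cast_one, mul_one, mul_one, add_sub_cancel_right]
      exact Finset.sum_congr rfl (fun t _ => by ring)
    rw [hΔ, fwdDiff_iter_finset_sum]
    apply Finset.sum_eq_zero
    intro t ht
    have ht' : t < d := Finset.mem_range.mp ht
    rw [fwdDiff_iter_const_smul, IH t ht' b m' (by omega), smul_zero]

lemma alt_sum_affine_pow' (a b : ℝ) (n d : ℕ) (hd : d ≤ n) :
    ∑ r ∈ Finset.range (n+2), (-1:ℝ)^r * ((n+1).choose r : ℝ) * (a*r+b)^d = 0 := by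
  have h0 := fwdDiff_iter_eq_sum_shift (1:ℝ) (fun x : ℝ ↦ (a*x+b)^d) (n+1) 0
  rw [fwdDiff_affine_pow a d b (n+1) (by omega)] at h0
  simp only [Pi.zero_apply, zsmul_eq_mul, Int.cast_mul, Int.cast_pow, Int.cast_neg,
    Int.cast_one, Int.cast_natCast, nsmul_eq_mul, mul_one, zero_add] at h0
  have key : ∀ r ∈ Finset.range (n+2),
      (-1:ℝ)^r * ((n+1).choose r : ℝ) * (a*r+b)^d
        = (-1:ℝ)^(n+1) * ((-1:ℝ)^(n+1-r) * ((n+1).choose r : ℝ) * (a*r+b)^d) := by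
    intro r hr
    have hr' : r ≤ n + 1 := by have := Finset.mem_range.mp hr; omega
    rw [neg_one_pow_sub_real' (n+1) r hr']
    have h3 : (-1:ℝ)^(n*2) = 1 := by rw [mul_comm, pow_mul]; norm_num
    linear_combination (-((-1:ℝ)^r * ((n+1).choose r : ℝ) * (a*r+b)^d)) * h3
  rw [Finset.sum_congr rfl key, ← Finset.mul_sum, ← h0, mul_zero]

/-- the duality
`v^{(p*)}_{i,j}(n) = (-1)^i·(p*/p)^{n-i}·v^{(p)}_{i,n-j}(n)` for `0 ≤ i, j ≤ n`,
where `1/p + 1/p* = 1`. -/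
theorem vMat_duality (p ps : ℝ) (hp : p ≠ 0) (hps : ps ≠ 0)
    (hconj : 1 / p + 1 / ps = 1) (n i j : ℕ) (hi : i ≤ n) (hj : j ≤ n) :
    vMat ps n i j = (-1 : ℝ) ^ i * (ps / p) ^ (n - i) * vMat p n i (n - j) := by
  have hkey : ps + p = p * ps := by field_simp at hconj; linarith
  set b : ℝ := 1 - p * (j + 1) with hb
  set T : ℕ → ℝ := fun r ↦ (-1:ℝ)^r * ((n+1).choose r : ℝ) * (p*r+b)^(n-i) with hT
  have hzero : ∑ r ∈ Finset.range (n+2), T r = 0 := alt_sum_affine_pow' p b n (n-i) (by omega)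
  have hsplit : ∑ r ∈ Finset.Ico (j+1) (n+2), T r = - ∑ r ∈ Finset.range (j+1), T r := by
    have hc := Finset.sum_Ico_consecutive T (by omega : 0 ≤ j+1) (by omega : j+1 ≤ n+2)
    rw [← Finset.range_eq_Ico, ← Finset.range_eq_Ico, hzero] at hc
    linarith
  have haff : ∀ r : ℕ, ps * ((j:ℝ) - r) + 1 = -((ps/p) * (p * (r:ℝ) + b)) := by
    intro r; rw [hb]; field_simp; ring_nf; linear_combination hkey
  have hL : vMat ps n i j = (-1:ℝ)^(n-i) * (ps/p)^(n-i) * ∑ r ∈ Finset.range (j+1), T r := by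
    unfold vMat
    rw [Finset.mul_sum]
    refine Finset.sum_congr rfl fun r _ => ?_
    have hpow : (-(ps/p*(p*(r:ℝ)+b)))^(n-i) = (-1:ℝ)^(n-i)*((ps/p)^(n-i)*(p*(r:ℝ)+b)^(n-i)) := by
      rw [neg_pow, mul_pow]
    rw [haff r, hpow, hT]
    ring
  have hR : vMat p n i (n-j) = ∑ r ∈ Finset.Ico (j+1) (n+2), (-1:ℝ)^(n+1-r) * ((n+1).choose r : ℝ) * (p*r+b)^(n-i) := by
    unfold vMat
    refine Finset.sum_nbij' (i := fun r ↦ n+1-r) (j := fun r ↦ n+1-r) ?_ ?_ ?_ ?_ ?_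
    · intro a ha; simp only [Finset.mem_range, Finset.mem_Ico] at *; omega
    · intro a ha; simp only [Finset.mem_range, Finset.mem_Ico] at *; omega
    · intro a ha; simp only [Finset.mem_range] at ha; show n + 1 - (n + 1 - a) = a; omega
    · intro a ha; simp only [Finset.mem_Ico] at ha; show n + 1 - (n + 1 - a) = a; omega
    · intro a ha
      simp only [Finset.mem_range] at ha
      have h1 : n + 1 - (n + 1 - a) = a := by omega
      have h2 : (n+1).choose (n+1-a) = (n+1).choose a := Nat.choose_symm (by omega)
      rw [h1, h2]
      have h3 : ((n + 1 - a : ℕ) : ℝ) = (n:ℝ) + 1 - a := by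
        push_cast [Nat.cast_sub (by omega : a ≤ n+1)]; ring
      have h4 : ((n - j : ℕ) : ℝ) = (n:ℝ) - j := by
        push_cast [Nat.cast_sub hj]; ring
      rw [h3, h4, hb]
      ring_nf
  have hR2 : vMat p n i (n-j) = (-1:ℝ)^(n+1) * ∑ r ∈ Finset.Ico (j+1) (n+2), T r := by
    rw [hR, Finset.mul_sum]
    refine Finset.sum_congr rfl fun r hr => ?_
    have hr' : r ≤ n + 1 := by simp only [Finset.mem_Ico] at hr; omega
    rw [neg_one_pow_sub_real' (n+1) r hr', hT]
    ring
  rw [hL, hR2, hsplit, neg_one_pow_sub_real' n i hi]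
  ring
end

section
/- Let p be a positive real number and define w_j(n) = n!·p^n·u^{(p)}_{0,n-j}(n), where u^{(p)}_{ij}(n) = Σ_{k=i}^{n} Σ_{l=n-j}^{k} s(k,l)·(-1)^{n-j-l}/(k!·p^l) · binom(l,n-j) · binom(n-i,n-k). Then w_j(n) satisfies the recursion w_j(n) = (pn-1)·w_j(n-1) + w_{j-1}(n-1), with w_0(0) = 1. -/
/-- `w_j(n) = n!·p^n·u^{(p)}_{0,n-j}(n)`, with the convention that `w_j(n) = 0`
for `j` outside `{0,...,n}` (the index `j` ranges over `ℤ`). -/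
noncomputable def wSF (p : ℝ) (n : ℕ) (j : ℤ) : ℝ :=
  if 0 ≤ j ∧ j ≤ n then (Nat.factorial n : ℝ) * p ^ n * uMat p n 0 (n - j.toNat) else 0

open Polynomial Finset

noncomputable def PP (n : ℕ) : Polynomial ℝ :=
  ∑ k ∈ Finset.range (n+1), Polynomial.C ((n.choose k : ℝ)/(k.factorial : ℝ)) * descPochhammer ℝ k

lemma chooseid (n k : ℕ) :
    ((n:ℝ)+1) * ((n+1).choose (k+1) : ℝ) = ((n:ℝ)+(k:ℝ)+2) * (n.choose (k+1) : ℝ)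
      + ((k:ℝ)+1) * (n.choose k : ℝ) := by
  have h1 : ((n:ℝ)+1) * (n.choose k : ℝ) = ((n+1).choose (k+1) : ℝ) * ((k:ℝ)+1) := by
    exact_mod_cast congrArg (Nat.cast (R := ℝ)) (Nat.add_one_mul_choose_eq n k)
  have h2 : (((n+1).choose (k+1) : ℝ)) = (n.choose k : ℝ) + (n.choose (k+1) : ℝ) := by
    exact_mod_cast congrArg (Nat.cast (R := ℝ)) (Nat.choose_succ_succ n k)
  linear_combination h1 + ((n:ℝ)+(k:ℝ)+2)*h2

lemma PP_rec (n : ℕ) :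
    Polynomial.C ((n:ℝ)+1) * PP (n+1)
      = (Polynomial.X + Polynomial.C ((n:ℝ)+1)) * PP n := by
  unfold PP
  rw [Finset.mul_sum, Finset.mul_sum]
  have step : ∀ k : ℕ, (Polynomial.X + Polynomial.C ((n:ℝ)+1)) *
      (Polynomial.C ((n.choose k : ℝ)/(k.factorial : ℝ)) * descPochhammer ℝ k)
      = Polynomial.C ((n.choose k : ℝ)/(k.factorial : ℝ)) * descPochhammer ℝ (k+1)
        + Polynomial.C ((n.choose k : ℝ)/(k.factorial : ℝ) * ((n:ℝ)+1+(k:ℝ))) * descPochhammer ℝ k := by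
    intro k
    rw [descPochhammer_succ_right]
    have hk : ((k : ℝ[X])) = Polynomial.C ((k:ℝ)) := by simp
    rw [hk]
    simp only [Polynomial.C_mul, Polynomial.C_add, Polynomial.C_1]
    ring
  rw [Finset.sum_congr rfl (fun k _ => step k), Finset.sum_add_distrib]
  have hext : ∑ k ∈ Finset.range (n+1),
      Polynomial.C ((n.choose k : ℝ)/(k.factorial : ℝ) * ((n:ℝ)+1+(k:ℝ))) * descPochhammer ℝ k
      = ∑ k ∈ Finset.range (n+2),
      Polynomial.C ((n.choose k : ℝ)/(k.factorial : ℝ) * ((n:ℝ)+1+(k:ℝ))) * descPochhammer ℝ k := by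
    rw [Finset.sum_range_succ (n := n+1)]
    simp [Nat.choose_succ_self]
  rw [hext]
  rw [← sub_eq_iff_eq_add, ← Finset.sum_sub_distrib]
  have : ∀ k ∈ Finset.range (n+2),
      Polynomial.C ((n:ℝ)+1) * (Polynomial.C (((n+1).choose k : ℝ)/(k.factorial : ℝ)) * descPochhammer ℝ k)
        - Polynomial.C ((n.choose k : ℝ)/(k.factorial : ℝ) * ((n:ℝ)+1+(k:ℝ))) * descPochhammer ℝ k
      = Polynomial.C (((n:ℝ)+1) * (((n+1).choose k : ℝ)/(k.factorial : ℝ))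
          - (n.choose k : ℝ)/(k.factorial : ℝ) * ((n:ℝ)+1+(k:ℝ))) * descPochhammer ℝ k := by
    intro k _
    simp only [Polynomial.C_sub, Polynomial.C_mul]
    ring
  rw [Finset.sum_congr rfl this, Finset.sum_range_succ']
  have h0 : Polynomial.C (((n:ℝ)+1) * (((n+1).choose 0 : ℝ)/((0).factorial : ℝ))
      - (n.choose 0 : ℝ)/((0).factorial : ℝ) * ((n:ℝ)+1+(0:ℕ))) * descPochhammer ℝ 0 = 0 := by
    norm_num
  rw [h0, add_zero]
  apply Finset.sum_congr rfl
  intro k _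
  have hfac : ((k+1).factorial : ℝ) = ((k:ℝ)+1) * (k.factorial : ℝ) := by
    push_cast [Nat.factorial_succ]; ring
  congr 1
  have hf : (k.factorial : ℝ) ≠ 0 := Nat.cast_ne_zero.mpr (Nat.factorial_ne_zero k)
  have hf1 : ((k:ℝ)+1) ≠ 0 := by positivity
  rw [hfac]
  rw [Polynomial.C_inj]
  field_simp
  push_cast
  linear_combination chooseid n k

lemma stirling_cast (k l : ℕ) : ((stirlingFirst k l : ℤ) : ℝ) = (descPochhammer ℝ k).coeff l := by
  rw [stirlingFirst, ← descPochhammer_map (Int.castRingHom ℝ) k, Polynomial.coeff_map]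
  simp

lemma deriv_desc_eval (k j : ℕ) (y : ℝ) :
    (Polynomial.derivative^[j] (descPochhammer ℝ k)).eval y
      = ∑ l ∈ Finset.Icc j k, (descPochhammer ℝ k).coeff l * (l.descFactorial j : ℝ) * y^(l-j) := by
  rcases le_or_gt j k with h | h
  · have hdeg : (Polynomial.derivative^[j] (descPochhammer ℝ k)).natDegree < k - j + 1 :=
      lt_of_le_of_lt (le_trans (Polynomial.natDegree_iterate_derivative _ _)
        (by rw [descPochhammer_natDegree])) (Nat.lt_succ_self _)
    rw [Polynomial.eval_eq_sum_range' hdeg]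
    rw [← Finset.Ico_add_one_right_eq_Icc, Finset.sum_Ico_eq_sum_range]
    have hr : k + 1 - j = k - j + 1 := by omega
    rw [hr]
    refine Finset.sum_congr rfl fun m _ => ?_
    rw [Polynomial.coeff_iterate_derivative]
    have h1 : j + m - j = m := by omega
    rw [h1]
    rw [nsmul_eq_mul]
    push_cast
    rw [add_comm j m]
    ring
  · have hz : Polynomial.derivative^[j] (descPochhammer ℝ k) = 0 :=
      Polynomial.iterate_derivative_eq_zero (by rw [descPochhammer_natDegree]; exact h)
    rw [hz, Finset.Icc_eq_empty (by omega)]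
    simp

lemma PP_deriv_eval (n j : ℕ) (y : ℝ) :
    (Polynomial.derivative^[j] (PP n)).eval y
      = ∑ k ∈ Finset.range (n+1), (n.choose k : ℝ)/(k.factorial : ℝ) *
          ∑ l ∈ Finset.Icc j k, (descPochhammer ℝ k).coeff l * (l.descFactorial j : ℝ) * y^(l-j) := by
  unfold PP
  rw [Polynomial.iterate_derivative_sum, Polynomial.eval_finset_sum]
  refine Finset.sum_congr rfl fun k _ => ?_
  rw [Polynomial.iterate_derivative_C_mul, Polynomial.eval_mul, Polynomial.eval_C, deriv_desc_eval]

lemma neg_one_zpow_nat (a b : ℕ) (h : a ≤ b) :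
    (-1:ℝ)^((a:ℤ) - (b:ℤ)) = (-1:ℝ)^(b - a) := by
  have he : ((a:ℤ) - b) = -(((b - a : ℕ)) : ℤ) := by omega
  rw [he, zpow_neg, zpow_natCast, ← inv_pow, inv_neg, inv_one]

lemma uMat_eq (p : ℝ) (hp : 0 < p) (n j : ℕ) (hj : j ≤ n) :
    uMat p n 0 (n - j)
      = p⁻¹^j / (j.factorial : ℝ) * (Polynomial.derivative^[j] (PP n)).eval (-p⁻¹) := by
  rw [PP_deriv_eval, Finset.mul_sum]
  unfold uMat
  have hI : Finset.Icc 0 n = Finset.range (n+1) := by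
    ext a; simp
  rw [hI]
  refine Finset.sum_congr rfl fun k hk => ?_
  rw [Finset.mul_sum, Finset.mul_sum]
  simp only [Finset.mem_range] at hk
  have hkn : k ≤ n := by omega
  have hnnj : n - (n - j) = j := by omega
  rw [hnnj]
  refine Finset.sum_congr rfl fun l hl => ?_
  simp only [Finset.mem_Icc] at hl
  obtain ⟨hjl, hlk⟩ := hl
  -- sign
  have hsig : ((n : ℤ) - (n - j : ℕ) - l) = (j : ℤ) - l := by omega
  rw [hsig, neg_one_zpow_nat j l hjl]
  rw [stirling_cast]
  rw [Nat.sub_zero, Nat.choose_symm hkn]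
  have hdf : ((l.descFactorial j : ℕ) : ℝ) = (j.factorial : ℝ) * (l.choose j : ℝ) := by
    exact_mod_cast congrArg (Nat.cast (R := ℝ)) (Nat.descFactorial_eq_factorial_mul_choose l j)
  rw [hdf]
  have hnegpow : (-p⁻¹)^(l-j) = (-1:ℝ)^(l-j) * p⁻¹^(l-j) := by
    rw [neg_pow]
  rw [hnegpow]
  have hpinv : p⁻¹^j * p⁻¹^(l-j) = p⁻¹^l := by
    rw [← pow_add]; congr 1; omega
  have hf : (k.factorial : ℝ) ≠ 0 := Nat.cast_ne_zero.mpr (Nat.factorial_ne_zero k)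
  have hjf : (j.factorial : ℝ) ≠ 0 := Nat.cast_ne_zero.mpr (Nat.factorial_ne_zero j)
  have hpne : p ≠ 0 := ne_of_gt hp
  have hpl : p⁻¹^l = (p^l)⁻¹ := by rw [inv_pow]
  field_simp
  have hppow : p^j * p^(l-j) = p^l := by rw [← pow_add]; congr 1; omega
  rw [← hppow]
  have e : p^j * p^(l-j) * (1/p)^j * (1/p)^(l-j) = 1 := by
    rw [one_div, inv_pow, inv_pow]; field_simp
  linear_combination (-((descPochhammer ℝ k).coeff l * (l.choose j : ℝ) * (n.choose k : ℝ))) * e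

lemma lin_leibniz (a : ℝ) (f : Polynomial ℝ) (j : ℕ) :
    Polynomial.derivative^[j+1] ((Polynomial.X + Polynomial.C a) * f)
      = (Polynomial.X + Polynomial.C a) * Polynomial.derivative^[j+1] f
        + (j+1 : ℝ) • Polynomial.derivative^[j] f := by
  induction j with
  | zero => simp [derivative_mul]; ring
  | succ j ih =>
    rw [Function.iterate_succ_apply', ih, derivative_add, derivative_mul, derivative_smul,
      ← Function.iterate_succ_apply' Polynomial.derivative]
    simp [Function.iterate_succ_apply']
    module

lemma q_rec (n j : ℕ) (y : ℝ) :
    ((n:ℝ)+1) * (Polynomial.derivative^[j] (PP (n+1))).eval y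
      = (y + ((n:ℝ)+1)) * (Polynomial.derivative^[j] (PP n)).eval y
        + (j:ℝ) * (Polynomial.derivative^[j-1] (PP n)).eval y := by
  cases j with
  | zero =>
    have h := congrArg (fun q => Polynomial.eval y q) (PP_rec n)
    simp only [Polynomial.eval_mul, Polynomial.eval_C, Polynomial.eval_add,
      Polynomial.eval_X] at h
    simpa using h
  | succ j =>
    have h := congrArg (fun q => Polynomial.eval y (Polynomial.derivative^[j+1] q)) (PP_rec n)
    simp only [Polynomial.iterate_derivative_C_mul, lin_leibniz, Polynomial.eval_mul,
      Polynomial.eval_add, Polynomial.eval_smul, Polynomial.eval_C, Polynomial.eval_X,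
      smul_eq_mul] at h
    push_cast
    simpa [Nat.add_sub_cancel] using h

lemma PP_natDegree (n : ℕ) : (PP n).natDegree ≤ n := by
  apply Polynomial.natDegree_sum_le_of_forall_le
  intro k hk
  simp only [Finset.mem_range] at hk
  exact le_trans (le_trans (Polynomial.natDegree_C_mul_le _ _)
    (le_of_eq (descPochhammer_natDegree (R := ℝ) k))) (by omega)

lemma wSF_eq (p : ℝ) (hp : 0 < p) (n j : ℕ) :
    wSF p n (j : ℤ) = (n.factorial : ℝ) * p^n
      * (p⁻¹^j / (j.factorial : ℝ) * (Polynomial.derivative^[j] (PP n)).eval (-p⁻¹)) := by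
  rcases le_or_gt j n with h | h
  · rw [wSF, if_pos ⟨Int.natCast_nonneg j, by exact_mod_cast h⟩, Int.toNat_natCast,
      uMat_eq p hp n j h]
  · rw [wSF, if_neg (by rintro ⟨-, h2⟩; exact absurd (by exact_mod_cast h2) (not_le.mpr h))]
    rw [Polynomial.iterate_derivative_eq_zero (lt_of_le_of_lt (PP_natDegree n) h)]
    simp

/-- `w_0(0) = 1` and
`w_j(n) = (pn-1)·w_j(n-1) + w_{j-1}(n-1)` for `n ≥ 1` and `0 ≤ j ≤ n`. -/
theorem wSF_recursion (p : ℝ) (hp : 0 < p) :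
    wSF p 0 0 = 1 ∧
      ∀ (n : ℕ) (j : ℤ), 1 ≤ n → 0 ≤ j → j ≤ n →
        wSF p n j = (p * n - 1) * wSF p (n - 1) j + wSF p (n - 1) (j - 1) := by

  have hpne : p ≠ 0 := ne_of_gt hp
  constructor
  · rw [wSF, if_pos ⟨le_refl 0, by exact_mod_cast Nat.zero_le 0⟩]
    simp [uMat, stirlingFirst]
  · intro n j hn h0 hj
    obtain ⟨m, rfl⟩ := Int.eq_ofNat_of_zero_le h0
    obtain ⟨n', rfl⟩ : ∃ n', n = n' + 1 := ⟨n - 1, by omega⟩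
    have hmn : m ≤ n' + 1 := by exact_mod_cast hj
    simp only [Nat.add_sub_cancel]
    have hfn : ((n'+1).factorial : ℝ) = ((n':ℝ)+1) * (n'.factorial : ℝ) := by
      push_cast [Nat.factorial_succ]; ring
    cases m with
    | zero =>
      have hneg : wSF p n' ((0:ℕ) - 1 : ℤ) = 0 := by
        rw [wSF, if_neg (by omega)]
      rw [hneg, wSF_eq p hp (n'+1) 0, wSF_eq p hp n' 0]
      have hq := q_rec n' 0 (-p⁻¹)
      have h1 : p * p⁻¹ = 1 := mul_inv_cancel₀ hpne
      set A := (Polynomial.derivative^[0] (PP (n'+1))).eval (-p⁻¹) with hA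
      set B := (Polynomial.derivative^[0] (PP n')).eval (-p⁻¹) with hB
      push_cast at hq ⊢
      have hq' : p * (((n':ℝ)+1) * A) = (p*((n':ℝ)+1) - 1) * B := by
        linear_combination p * hq - B * h1
      rw [hfn]
      simp only [Nat.factorial_zero, Nat.cast_one, pow_zero]
      linear_combination ((n'.factorial : ℝ) * p^n') * hq'
    | succ m' =>
      have hc : ((m'+1 : ℕ) : ℤ) - 1 = ((m' : ℕ) : ℤ) := by push_cast; ring
      rw [hc, wSF_eq p hp (n'+1) (m'+1), wSF_eq p hp n' (m'+1), wSF_eq p hp n' m']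
      have hq := q_rec n' (m'+1) (-p⁻¹)
      simp only [Nat.add_sub_cancel] at hq
      have hfm : ((m'+1).factorial : ℝ) = ((m':ℝ)+1) * (m'.factorial : ℝ) := by
        push_cast [Nat.factorial_succ]; ring
      have h1 : p * p⁻¹ = 1 := mul_inv_cancel₀ hpne
      have hMne : ((m':ℝ)+1) ≠ 0 := by positivity
      have h2 : ((m':ℝ)+1) * ((m':ℝ)+1)⁻¹ = 1 := mul_inv_cancel₀ hMne
      set A := (Polynomial.derivative^[m'+1] (PP (n'+1))).eval (-p⁻¹) with hA
      set B := (Polynomial.derivative^[m'+1] (PP n')).eval (-p⁻¹) with hB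
      set C := (Polynomial.derivative^[m'] (PP n')).eval (-p⁻¹) with hC
      push_cast at hq ⊢
      have hq' : p * (((n':ℝ)+1) * A)
          = (p*((n':ℝ)+1) - 1) * B + p*((m':ℝ)+1)*C := by
        linear_combination p * hq - B * h1
      rw [hfn, hfm]
      simp only [div_mul_eq_div_div_swap]
      linear_combination ((n'.factorial : ℝ) * p^n' * p⁻¹^(m'+1)/(m'.factorial:ℝ)/((m':ℝ)+1)) * hq'
        + ((n'.factorial : ℝ) * p^n' * C * p * p⁻¹^(m'+1)/(m'.factorial:ℝ)) * h2
        + ((n'.factorial : ℝ) * p^n' * C * p⁻¹^m'/(m'.factorial:ℝ)) * h1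
end

section
/- Let b ≥ 2, n ≥ 1 be integers, p a positive integer dividing b-1, and set c = (b-1)/p. For a random uniformly chosen array A ∈ {0,...,b-1}^n defining a (b,n,p)-shuffle, the probability of obtaining a fixed colored permutation σ ∈ Z_p ≀ S_n equals b^{-n} · binom(n + c - d(σ^{-1}), n), where d denotes the number of descents. -/
/-- The colored permutation group `G_{p,n} = Z_p ≀ S_n`: an element is determined by
a permutation `σ ∈ S_n` together with colors `σ^c : [n] → Z_p`. -/
structure ColoredPerm (p n : ℕ) where
  perm : Equiv.Perm (Fin n)
  color : Fin n → ZMod p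

/-- The rank of `(σ(i), σ^c(i))` in the total order
`(1,0)<⋯<(n,0)<(1,p-1)<⋯<(n,p-1)<(1,p-2)<⋯<(n,1)` on `[n] × Z_p`
(as a natural number; `0` for `i` out of range). -/
def kvCP {p n : ℕ} (σ : ColoredPerm p n) (i : ℕ) : ℕ :=
  if h : i < n then
    (if σ.color ⟨i, h⟩ = 0 then 0 else p - (σ.color ⟨i, h⟩).val) * n
      + (σ.perm ⟨i, h⟩ : ℕ)
  else 0

/-- The number of descents of a colored permutation: a descent at
`i ∈ {1,...,n-1}` iff `(σ(i),σ^c(i)) > (σ(i+1),σ^c(i+1))`, and a descent at `n`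
iff `σ^c(n) ≠ 0`. -/
def descCP {p n : ℕ} (σ : ColoredPerm p n) : ℕ :=
  ((Finset.range (n - 1)).filter fun i => kvCP σ (i + 1) < kvCP σ i).card
    + (if h : 0 < n then
        (if σ.color ⟨n - 1, Nat.sub_lt h Nat.one_pos⟩ ≠ 0 then 1 else 0)
      else 0)

/-- The inverse of a colored permutation: `σ⁻¹ = (σ.perm⁻¹, j ↦ -σ^c(σ.perm⁻¹ j))`. -/
def invCP {p n : ℕ} (σ : ColoredPerm p n) : ColoredPerm p n :=
  ⟨σ.perm⁻¹, fun j => -σ.color (σ.perm⁻¹ j)⟩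

/-- The array of labels `A ∈ {0,...,b-1}^n` induces the colored permutation `σ`
under the `(b,n,p)`-shuffle: `σ(i)` is the rank of `i` when sorting positions by
labels (stably), and `σ^c(i) = a_i mod p`. -/
def Induces {p n b : ℕ} (A : Fin n → Fin b) (σ : ColoredPerm p n) : Prop :=
  (∀ i, σ.color i = ((A i : ℕ) : ZMod p)) ∧
    ∀ i j, ((A i : ℕ) < (A j : ℕ) ∨ ((A i : ℕ) = (A j : ℕ) ∧ i < j)) ↔
      σ.perm i < σ.perm j

theorem Equiv.Perm.inv_apply_self {α : Type*} (f : Equiv.Perm α) (x : α) : f⁻¹ (f x) = x :=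
  f.symm_apply_apply x

theorem Equiv.Perm.apply_inv_self {α : Type*} (f : Equiv.Perm α) (x : α) : f (f⁻¹ x) = x :=
  f.apply_symm_apply x

namespace ShuffleAux


/-! ### Lexicographic arithmetic lemmas -/

theorem mul_lex_lt {m k k' x x' : ℕ} (hx : x < m)
    (h : k < k' ∨ (k = k' ∧ x < x')) : k * m + x < k' * m + x' := by
  rcases h with h | ⟨rfl, h⟩
  · calc k * m + x < k * m + m := Nat.add_lt_add_left hx _
      _ = (k + 1) * m := by ring
      _ ≤ k' * m := Nat.mul_le_mul_right m h
      _ ≤ k' * m + x' := Nat.le_add_right _ _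
  · exact Nat.add_lt_add_left h _

theorem mul_lex_lt_iff {m k k' x x' : ℕ} (hx : x < m) (hx' : x' < m) :
    k * m + x < k' * m + x' ↔ (k < k' ∨ (k = k' ∧ x < x')) := by
  constructor
  · intro h
    rcases Nat.lt_trichotomy k k' with h1 | h1 | h1
    · exact Or.inl h1
    · subst h1; exact Or.inr ⟨rfl, Nat.lt_of_add_lt_add_left h⟩
    · exact absurd (mul_lex_lt hx' (Or.inl h1)) (Nat.lt_asymm h)
  · exact mul_lex_lt hx

theorem mul_lex_eq_iff {m k k' x x' : ℕ} (hx : x < m) (hx' : x' < m) :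
    k * m + x = k' * m + x' ↔ (k = k' ∧ x = x') := by
  constructor
  · intro h
    rcases Nat.lt_trichotomy k k' with h1 | h1 | h1
    · exact absurd h (Nat.ne_of_lt (mul_lex_lt hx (Or.inl h1)))
    · subst h1; exact ⟨rfl, by omega⟩
    · exact absurd h.symm (Nat.ne_of_lt (mul_lex_lt hx' (Or.inl h1)))
  · rintro ⟨rfl, rfl⟩; rfl

/-- The key equivalence between the value-order condition and the quotient-chain
condition. -/
theorem LR_iff {p n : ℕ} {a a' k k' x x' : ℕ} (hk : k < p) (hk' : k' < p)
    (hx : x < n) (hx' : x' < n) (hxx : x ≠ x') :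
    (a * p + k < a' * p + k' ∨ (a * p + k = a' * p + k' ∧ x < x')) ↔
      a + (if k' * n + x' < k * n + x then 1 else 0) ≤ a' := by
  rw [mul_lex_lt_iff hk hk', mul_lex_eq_iff hk hk']
  by_cases h : k' * n + x' < k * n + x
  · rw [if_pos h]
    rw [mul_lex_lt_iff hx' hx] at h
    omega
  · rw [if_neg h]
    rw [mul_lex_lt_iff hx' hx] at h
    omega

/-! ### Chain lemmas over `ℕ` sequences -/

theorem chain_le {N : ℕ} (f : ℕ → ℕ) (hstep : ∀ i, i + 1 < N → f i ≤ f (i + 1)) :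
    ∀ a bb, a ≤ bb → bb < N → f a ≤ f bb := by
  intro a bb
  induction bb with
  | zero =>
    intro h _
    obtain rfl : a = 0 := by omega
    exact le_rfl
  | succ b ih =>
    intro h hN
    rcases Nat.eq_or_lt_of_le h with rfl | h'
    · exact le_rfl
    · exact (ih (by omega) (by omega)).trans (hstep b hN)

theorem chain_lt {N : ℕ} (f : ℕ → ℕ) (hstep : ∀ i, i + 1 < N → f i < f (i + 1)) :
    ∀ a bb, a < bb → bb < N → f a < f bb := by
  intro a bb
  induction bb with
  | zero => intro h _; exact absurd h (Nat.not_lt_zero a)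
  | succ b ih =>
    intro h hN
    rcases Nat.eq_or_lt_of_le h with h' | h'
    · obtain rfl : a = b := by omega
      exact hstep _ hN
    · exact (ih (by omega) (by omega)).trans (hstep b hN)

theorem chain_ge {N : ℕ} (f : ℕ → ℕ) (hstep : ∀ i, i + 1 < N → f i < f (i + 1)) :
    ∀ j, j < N → j ≤ f j := by
  intro j
  induction j with
  | zero => intro _; exact Nat.zero_le _
  | succ b ih =>
    intro hN
    have := hstep b hN
    have := ih (by omega)
    omega

/-- Combining adjacent "stable sorting" conditions into a global one. -/
theorem chain_pair {N : ℕ} (f g : ℕ → ℕ)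
    (hstep : ∀ i, i + 1 < N →
      (f i < f (i + 1) ∨ (f i = f (i + 1) ∧ g i < g (i + 1)))) :
    ∀ a bb, a < bb → bb < N → (f a < f bb ∨ (f a = f bb ∧ g a < g bb)) := by
  intro a bb
  induction bb with
  | zero => intro h _; exact absurd h (Nat.not_lt_zero a)
  | succ b ih =>
    intro h hN
    have hb := hstep b hN
    rcases Nat.eq_or_lt_of_le h with h' | h'
    · obtain rfl : a = b := by omega
      exact hb
    · have ha := ih (by omega) (by omega)
      omega



variable {p n b : ℕ}

def keyv [NeZero p] (σ : ColoredPerm p n) (j : Fin n) : ℕ :=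
  (σ.color (σ.perm⁻¹ j)).val

theorem keyv_lt [NeZero p] (σ : ColoredPerm p n) (j : Fin n) : keyv σ j < p :=
  ZMod.val_lt _

def descP (σ : ColoredPerm p n) (i : ℕ) : Prop :=
  kvCP (invCP σ) (i + 1) < kvCP (invCP σ) i

instance (σ : ColoredPerm p n) : DecidablePred (descP σ) := fun _ => Nat.decLt _ _

def dbit (σ : ColoredPerm p n) (i : ℕ) : ℕ := if descP σ i then 1 else 0

def Dn (σ : ColoredPerm p n) (j : ℕ) : ℕ :=
  ((Finset.range j).filter (descP σ)).card

theorem Dn_succ (σ : ColoredPerm p n) (j : ℕ) :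
    Dn σ (j + 1) = Dn σ j + dbit σ j := by
  unfold Dn dbit
  rw [Finset.range_add_one, Finset.filter_insert]
  split_ifs with h
  · rw [Finset.card_insert_of_notMem
      (fun hm => Finset.notMem_range_self (Finset.mem_filter.mp hm).1)]
  · rfl

theorem Dn_le (σ : ColoredPerm p n) (j : ℕ) : Dn σ j ≤ j :=
  le_trans (Finset.card_filter_le _ _) (le_of_eq (Finset.card_range j))

theorem kv_eq [NeZero p] (σ : ColoredPerm p n) (j : ℕ) (h : j < n) :
    kvCP (invCP σ) j = keyv σ ⟨j, h⟩ * n + (σ.perm⁻¹ ⟨j, h⟩ : ℕ) := by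
  rw [kvCP, dif_pos h]
  simp only [invCP, keyv]
  show (if -σ.color (σ.perm⁻¹ ⟨j, h⟩) = 0 then 0 else p - (-σ.color (σ.perm⁻¹ ⟨j, h⟩)).val) * n
    + (σ.perm⁻¹ ⟨j, h⟩ : ℕ) = (σ.color (σ.perm⁻¹ ⟨j, h⟩)).val * n + (σ.perm⁻¹ ⟨j, h⟩ : ℕ)
  set y := σ.color (σ.perm⁻¹ ⟨j, h⟩) with hy
  by_cases h0 : y = 0
  · simp [h0]
  · have hne : NeZero y := ⟨h0⟩
    rw [if_neg (by simpa using h0), ZMod.val_neg_of_ne_zero]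
    have hlt : y.val < p := ZMod.val_lt y
    have h1 : 0 < y.val := Nat.pos_of_ne_zero (fun hv => h0 ((ZMod.val_eq_zero y).mp hv))
    have : p - (p - y.val) = y.val := by omega
    rw [this]

theorem desc_eq [NeZero p] (σ : ColoredPerm p n) (hn : 0 < n) :
    descCP (invCP σ) = Dn σ (n - 1) +
      (if keyv σ ⟨n - 1, Nat.sub_lt hn Nat.one_pos⟩ ≠ 0 then 1 else 0) := by
  unfold descCP Dn
  rw [dif_pos hn]
  congr 1
  · have hiff : ((invCP σ).color ⟨n - 1, Nat.sub_lt hn Nat.one_pos⟩ ≠ 0) ↔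
        (keyv σ ⟨n - 1, Nat.sub_lt hn Nat.one_pos⟩ ≠ 0) := by
      simp only [invCP, keyv, ne_eq, neg_eq_zero, ZMod.val_eq_zero]
    exact if_congr hiff rfl rfl



variable {p n b : ℕ}

/-- Intermediate predicate on the "sorted value sequence" `v = A ∘ σ.perm⁻¹`. -/
def Pv [NeZero p] (σ : ColoredPerm p n) (v : Fin n → Fin b) : Prop :=
  (∀ j, (v j : ℕ) % p = keyv σ j) ∧
  ∀ i : ℕ, ∀ h : i + 1 < n,
    ((v ⟨i, Nat.lt_of_succ_lt h⟩ : ℕ) < (v ⟨i + 1, h⟩ : ℕ) ∨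
      ((v ⟨i, Nat.lt_of_succ_lt h⟩ : ℕ) = (v ⟨i + 1, h⟩ : ℕ) ∧
        (σ.perm⁻¹ ⟨i, Nat.lt_of_succ_lt h⟩ : ℕ) < (σ.perm⁻¹ ⟨i + 1, h⟩ : ℕ)))

/-- Quotient-chain condition. -/
def Qcond [NeZero p] (σ : ColoredPerm p n) (c : ℕ) (hn : 0 < n)
    (q : Fin n → ℕ) : Prop :=
  (∀ i : ℕ, ∀ h : i + 1 < n, q ⟨i, Nat.lt_of_succ_lt h⟩ + dbit σ i ≤ q ⟨i + 1, h⟩) ∧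
  q ⟨n - 1, Nat.sub_lt hn Nat.one_pos⟩ +
    (if keyv σ ⟨n - 1, Nat.sub_lt hn Nat.one_pos⟩ ≠ 0 then 1 else 0) ≤ c

theorem induces_iff [NeZero p] (σ : ColoredPerm p n) (A : Fin n → Fin b) :
    Induces A σ ↔ Pv σ (fun j => A (σ.perm⁻¹ j)) := by
  unfold Induces Pv
  apply and_congr
  · constructor
    · intro H j
      unfold keyv
      rw [H (σ.perm⁻¹ j), ZMod.val_natCast]
    · intro H i
      have hi := H (σ.perm i)
      unfold keyv at hi
      simp only [Equiv.Perm.inv_apply_self] at hi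
      apply ZMod.val_injective p
      rw [ZMod.val_natCast]
      exact hi.symm
  · constructor
    · intro H i h
      have hmp := (H (σ.perm⁻¹ ⟨i, Nat.lt_of_succ_lt h⟩) (σ.perm⁻¹ ⟨i + 1, h⟩)).mpr
      rw [Equiv.Perm.apply_inv_self, Equiv.Perm.apply_inv_self] at hmp
      have h2 := hmp (by rw [Fin.lt_def]; simp)
      rcases h2 with h2 | ⟨h2, h3⟩
      · exact Or.inl h2
      · exact Or.inr ⟨h2, Fin.lt_def.mp h3⟩
    · intro H i j
      set f : ℕ → ℕ :=
        fun a => if h : a < n then (A (σ.perm⁻¹ ⟨a, h⟩) : ℕ) else 0 with hf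
      set g : ℕ → ℕ :=
        fun a => if h : a < n then (σ.perm⁻¹ ⟨a, h⟩ : ℕ) else 0 with hg
      have hfv : ∀ jj : Fin n, f (jj : ℕ) = (A (σ.perm⁻¹ jj) : ℕ) := by
        intro jj; simp only [hf]; rw [dif_pos jj.isLt]
      have hgv : ∀ jj : Fin n, g (jj : ℕ) = (σ.perm⁻¹ jj : ℕ) := by
        intro jj; simp only [hg]; rw [dif_pos jj.isLt]
      have hstep : ∀ a, a + 1 < n →
          (f a < f (a + 1) ∨ (f a = f (a + 1) ∧ g a < g (a + 1))) := by
        intro a ha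
        have hH := H a ha
        simp only [hf, hg, dif_pos (Nat.lt_of_succ_lt ha), dif_pos ha]
        exact hH
      have claim := chain_pair f g hstep
      constructor
      · intro hL
        rcases lt_trichotomy (σ.perm i) (σ.perm j) with hc | hc | hc
        · exact hc
        · exfalso
          obtain rfl : i = j := σ.perm.injective hc
          rcases hL with h1 | ⟨h1, h2⟩
          · exact lt_irrefl _ h1
          · exact lt_irrefl _ h2
        · exfalso
          have hcl := claim (σ.perm j : ℕ) (σ.perm i : ℕ) hc (σ.perm i).isLt
          rw [hfv (σ.perm j), hfv (σ.perm i), hgv (σ.perm j), hgv (σ.perm i)] at hcl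
          rw [Equiv.Perm.inv_apply_self, Equiv.Perm.inv_apply_self] at hcl
          rw [Fin.lt_def] at hL
          omega
      · intro hlt
        have hcl := claim (σ.perm i : ℕ) (σ.perm j : ℕ) hlt (σ.perm j).isLt
        rw [hfv (σ.perm i), hfv (σ.perm j), hgv (σ.perm i), hgv (σ.perm j)] at hcl
        rw [Equiv.Perm.inv_apply_self, Equiv.Perm.inv_apply_self] at hcl
        rw [Fin.lt_def]
        omega

/-- Equivalence between arrays inducing `σ` and value sequences satisfying `Pv`. -/
def E1 [NeZero p] (σ : ColoredPerm p n) :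
    {A : Fin n → Fin b // Induces A σ} ≃ {v : Fin n → Fin b // Pv σ v} where
  toFun := fun A => ⟨fun j => A.1 (σ.perm⁻¹ j), (induces_iff σ A.1).mp A.2⟩
  invFun := fun v => ⟨fun i => v.1 (σ.perm i), by
    apply (induces_iff σ _).mpr
    have hv := v.2
    simpa [Equiv.Perm.apply_inv_self] using hv⟩
  left_inv := fun A => Subtype.ext (funext fun i => by simp)
  right_inv := fun v => Subtype.ext (funext fun j => by simp)



variable {p n b : ℕ}

theorem kbit_le [NeZero p] (σ : ColoredPerm p n) (hn : 0 < n) {c : ℕ}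
    {q : Fin n → ℕ} (hq : Qcond σ c hn q) (j : Fin n) :
    q j + (if keyv σ j ≠ 0 then 1 else 0) ≤ c := by
  set f : ℕ → ℕ :=
    fun a => if h : a < n then q ⟨a, h⟩ + (if keyv σ ⟨a, h⟩ ≠ 0 then 1 else 0)
      else 0 with hf
  have hfv : ∀ jj : Fin n, f (jj : ℕ) = q jj + (if keyv σ jj ≠ 0 then 1 else 0) := by
    intro jj; simp only [hf]; rw [dif_pos jj.isLt]
  have hstep : ∀ i, i + 1 < n → f i ≤ f (i + 1) := by
    intro i hi
    simp only [hf, dif_pos (Nat.lt_of_succ_lt hi), dif_pos hi]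
    have hchain := hq.1 i hi
    by_cases hd : descP σ i
    · have hd1 : dbit σ i = 1 := if_pos hd
      rw [hd1] at hchain
      split_ifs <;> omega
    · have hd0 : dbit σ i = 0 := if_neg hd
      rw [hd0] at hchain
      have hk : keyv σ ⟨i, Nat.lt_of_succ_lt hi⟩ ≤ keyv σ ⟨i + 1, hi⟩ := by
        unfold descP at hd
        rw [kv_eq σ (i + 1) hi, kv_eq σ i (Nat.lt_of_succ_lt hi)] at hd
        by_contra hlt
        push_neg at hlt
        exact hd (mul_lex_lt (Fin.is_lt _) (Or.inl hlt))
      split_ifs <;> omega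
  have hle := chain_le f hstep (j : ℕ) (n - 1) (by omega) (by omega)
  rw [hfv j] at hle
  have hlast : f (n - 1) ≤ c := by
    simp only [hf]
    rw [dif_pos (Nat.sub_lt hn Nat.one_pos)]
    exact hq.2
  exact hle.trans hlast

theorem Dn_le_q [NeZero p] (σ : ColoredPerm p n) (hn : 0 < n) {c : ℕ}
    {q : Fin n → ℕ} (hq : Qcond σ c hn q) :
    ∀ j, ∀ h : j < n, Dn σ j ≤ q ⟨j, h⟩ := by
  intro j
  induction j with
  | zero => intro h; simp [Dn]
  | succ a ih =>
    intro h
    rw [Dn_succ]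
    have h1 := hq.1 a h
    have h2 := ih (Nat.lt_of_succ_lt h)
    omega

theorem vOf_lt [NeZero p] (σ : ColoredPerm p n) (hn : 0 < n) {c : ℕ}
    (hb : b = p * c + 1) {q : Fin n → ℕ} (hq : Qcond σ c hn q) (j : Fin n) :
    q j * p + keyv σ j < b := by
  have hk := kbit_le σ hn hq j
  have hkp := keyv_lt σ j
  by_cases h0 : keyv σ j = 0
  · simp only [h0, ne_eq, not_true_eq_false, if_false] at hk
    have h1 : q j * p ≤ c * p := Nat.mul_le_mul_right p (by omega)
    have h2 : c * p = p * c := Nat.mul_comm _ _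
    omega
  · rw [if_pos h0] at hk
    have h1 : (q j + 1) * p ≤ c * p := Nat.mul_le_mul_right p hk
    have he : (q j + 1) * p = q j * p + p := by ring
    have h2 : c * p = p * c := Nat.mul_comm _ _
    omega

theorem Pv_to_Qcond [NeZero p] (σ : ColoredPerm p n) (hn : 0 < n) (hp : 0 < p)
    {c : ℕ} (hb : b = p * c + 1) {v : Fin n → Fin b} (hv : Pv σ v) :
    Qcond σ c hn (fun j => (v j : ℕ) / p) := by
  have hvj : ∀ j : Fin n, (v j : ℕ) = (v j : ℕ) / p * p + keyv σ j := by
    intro j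
    rw [← hv.1 j]
    exact (Nat.div_add_mod' _ p).symm
  constructor
  · intro i h
    have hL := hv.2 i h
    have hne : (σ.perm⁻¹ ⟨i, Nat.lt_of_succ_lt h⟩ : ℕ) ≠
        (σ.perm⁻¹ ⟨i + 1, h⟩ : ℕ) := by
      intro he
      have heq : (⟨i, Nat.lt_of_succ_lt h⟩ : Fin n) = ⟨i + 1, h⟩ :=
        σ.perm⁻¹.injective (Fin.val_injective he)
      simp [Fin.ext_iff] at heq
    have hcond : descP σ i ↔
        (keyv σ ⟨i + 1, h⟩ * n + (σ.perm⁻¹ ⟨i + 1, h⟩ : ℕ) <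
          keyv σ ⟨i, Nat.lt_of_succ_lt h⟩ * n + (σ.perm⁻¹ ⟨i, Nat.lt_of_succ_lt h⟩ : ℕ)) := by
      unfold descP
      rw [kv_eq σ (i + 1) h, kv_eq σ i (Nat.lt_of_succ_lt h)]
    have hd : dbit σ i =
        if keyv σ ⟨i + 1, h⟩ * n + (σ.perm⁻¹ ⟨i + 1, h⟩ : ℕ) <
            keyv σ ⟨i, Nat.lt_of_succ_lt h⟩ * n + (σ.perm⁻¹ ⟨i, Nat.lt_of_succ_lt h⟩ : ℕ)
          then 1 else 0 := by
      unfold dbit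
      exact if_congr hcond rfl rfl
    show (v ⟨i, Nat.lt_of_succ_lt h⟩ : ℕ) / p + dbit σ i ≤ (v ⟨i + 1, h⟩ : ℕ) / p
    rw [hd]
    rw [hvj ⟨i, Nat.lt_of_succ_lt h⟩, hvj ⟨i + 1, h⟩] at hL
    exact (LR_iff (keyv_lt σ _) (keyv_lt σ _) (Fin.is_lt _) (Fin.is_lt _) hne).mp hL
  · set jl : Fin n := ⟨n - 1, Nat.sub_lt hn Nat.one_pos⟩ with hjl
    show (v jl : ℕ) / p + (if keyv σ jl ≠ 0 then 1 else 0) ≤ c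
    have hvlt := (v jl).isLt
    have he := hvj jl
    have hkp := keyv_lt σ jl
    by_cases h0 : keyv σ jl = 0
    · simp only [h0, ne_eq, not_true_eq_false, if_false]
      have hqc : (v jl : ℕ) / p * p ≤ c * p := by
        have h2 : c * p = p * c := Nat.mul_comm _ _
        omega
      have := Nat.le_of_mul_le_mul_right hqc hp
      omega
    · rw [if_pos h0]
      have hqc : (v jl : ℕ) / p * p < c * p := by
        have h2 : c * p = p * c := Nat.mul_comm _ _
        omega
      have hcon : c ≤ (v jl : ℕ) / p → c * p ≤ (v jl : ℕ) / p * p :=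
        fun hcc => Nat.mul_le_mul_right p hcc
      omega

theorem Qcond_to_Pv [NeZero p] (σ : ColoredPerm p n) (hn : 0 < n) (hp : 0 < p)
    {c : ℕ} (hb : b = p * c + 1) {q : Fin n → ℕ} (hq : Qcond σ c hn q) :
    Pv σ (fun j => (⟨q j * p + keyv σ j, vOf_lt σ hn hb hq j⟩ : Fin b)) := by
  constructor
  · intro j
    show (q j * p + keyv σ j) % p = keyv σ j
    rw [add_comm, Nat.add_mul_mod_self_right]
    exact Nat.mod_eq_of_lt (keyv_lt σ j)
  · intro i h
    have hchain := hq.1 i h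
    have hne : (σ.perm⁻¹ ⟨i, Nat.lt_of_succ_lt h⟩ : ℕ) ≠
        (σ.perm⁻¹ ⟨i + 1, h⟩ : ℕ) := by
      intro he
      have heq : (⟨i, Nat.lt_of_succ_lt h⟩ : Fin n) = ⟨i + 1, h⟩ :=
        σ.perm⁻¹.injective (Fin.val_injective he)
      simp [Fin.ext_iff] at heq
    have hcond : descP σ i ↔
        (keyv σ ⟨i + 1, h⟩ * n + (σ.perm⁻¹ ⟨i + 1, h⟩ : ℕ) <
          keyv σ ⟨i, Nat.lt_of_succ_lt h⟩ * n + (σ.perm⁻¹ ⟨i, Nat.lt_of_succ_lt h⟩ : ℕ)) := by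
      unfold descP
      rw [kv_eq σ (i + 1) h, kv_eq σ i (Nat.lt_of_succ_lt h)]
    have hd : dbit σ i =
        if keyv σ ⟨i + 1, h⟩ * n + (σ.perm⁻¹ ⟨i + 1, h⟩ : ℕ) <
            keyv σ ⟨i, Nat.lt_of_succ_lt h⟩ * n + (σ.perm⁻¹ ⟨i, Nat.lt_of_succ_lt h⟩ : ℕ)
          then 1 else 0 := by
      unfold dbit
      exact if_congr hcond rfl rfl
    rw [hd] at hchain
    exact (LR_iff (keyv_lt σ _) (keyv_lt σ _) (Fin.is_lt _) (Fin.is_lt _) hne).mpr hchain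

/-- Equivalence between value sequences and quotient chains. -/
def E2 [NeZero p] (σ : ColoredPerm p n) (hn : 0 < n) (hp : 0 < p) {c : ℕ}
    (hb : b = p * c + 1) :
    {v : Fin n → Fin b // Pv σ v} ≃ {q : Fin n → ℕ // Qcond σ c hn q} where
  toFun := fun vv => ⟨fun j => (vv.1 j : ℕ) / p, Pv_to_Qcond σ hn hp hb vv.2⟩
  invFun := fun qq => ⟨fun j => ⟨qq.1 j * p + keyv σ j, vOf_lt σ hn hb qq.2 j⟩,
    Qcond_to_Pv σ hn hp hb qq.2⟩
  left_inv := fun vv => by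
    apply Subtype.ext
    funext j
    apply Fin.ext
    show (vv.1 j : ℕ) / p * p + keyv σ j = (vv.1 j : ℕ)
    rw [← vv.2.1 j]
    exact Nat.div_add_mod' _ p
  right_inv := fun qq => by
    apply Subtype.ext
    funext j
    show (qq.1 j * p + keyv σ j) / p = qq.1 j
    rw [add_comm, Nat.add_mul_div_right _ _ hp,
      Nat.div_eq_of_lt (keyv_lt σ j), zero_add]



variable {p n b : ℕ}

def sOf (σ : ColoredPerm p n) (q : Fin n → ℕ) : ℕ → ℕ :=
  fun a => if h : a < n then q ⟨a, h⟩ + (a - Dn σ a) else 0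

def qOf (σ : ColoredPerm p n) {m : ℕ} (t : Fin n → Fin m) : Fin n → ℕ :=
  fun j => ((t j : ℕ) + Dn σ (j : ℕ)) - (j : ℕ)

theorem sOf_step [NeZero p] (σ : ColoredPerm p n) (hn : 0 < n) {c : ℕ}
    {q : Fin n → ℕ} (hq : Qcond σ c hn q) :
    ∀ i, i + 1 < n → sOf σ q i < sOf σ q (i + 1) := by
  intro i hi
  unfold sOf
  rw [dif_pos (Nat.lt_of_succ_lt hi), dif_pos hi]
  have h1 := hq.1 i hi
  have h2 := Dn_succ σ i
  have h3 := Dn_le σ i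
  have h4 : dbit σ i ≤ 1 := by unfold dbit; split_ifs <;> omega
  omega

theorem sOf_lt [NeZero p] (σ : ColoredPerm p n) (hn : 0 < n) {c : ℕ}
    {q : Fin n → ℕ} (hq : Qcond σ c hn q) :
    ∀ a, a < n → sOf σ q a < n + c - descCP (invCP σ) := by
  intro a ha
  have hstep := sOf_step σ hn hq
  have h1 : sOf σ q a ≤ sOf σ q (n - 1) :=
    chain_le _ (fun i hi => le_of_lt (hstep i hi)) a (n - 1) (by omega) (by omega)
  have h2 : sOf σ q (n - 1) < n + c - descCP (invCP σ) := by
    unfold sOf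
    rw [dif_pos (Nat.sub_lt hn Nat.one_pos)]
    have hq2 := hq.2
    have hD := Dn_le_q σ hn hq (n - 1) (Nat.sub_lt hn Nat.one_pos)
    have hDle := Dn_le σ (n - 1)
    rw [desc_eq σ hn]
    have hfb : (if keyv σ ⟨n - 1, Nat.sub_lt hn Nat.one_pos⟩ ≠ 0 then 1 else 0) ≤ 1 := by
      split_ifs <;> omega
    omega
  omega

theorem le_t {m : ℕ} {t : Fin n → Fin m} (ht : StrictMono t) (j : Fin n) :
    (j : ℕ) ≤ (t j : ℕ) := by
  set tN : ℕ → ℕ := fun a => if h : a < n then (t ⟨a, h⟩ : ℕ) else 0 with htN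
  have hTv : ∀ (a : ℕ) (h : a < n), tN a = (t ⟨a, h⟩ : ℕ) := by
    intro a h; simp only [htN]; rw [dif_pos h]
  have hstepT : ∀ i, i + 1 < n → tN i < tN (i + 1) := by
    intro i hi
    rw [hTv i (Nat.lt_of_succ_lt hi), hTv (i + 1) hi]
    exact Fin.lt_def.mp (ht (Fin.mk_lt_mk.mpr (Nat.lt_succ_self i)))
  have := chain_ge tN hstepT (j : ℕ) j.isLt
  rw [hTv (j : ℕ) j.isLt] at this
  simpa using this

theorem qOf_cond [NeZero p] (σ : ColoredPerm p n) (hn : 0 < n) {c : ℕ}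
    {t : Fin n → Fin (n + c - descCP (invCP σ))} (ht : StrictMono t) :
    Qcond σ c hn (qOf σ t) := by
  have hm := desc_eq σ hn
  constructor
  · intro i h
    have h1 : (t ⟨i, Nat.lt_of_succ_lt h⟩ : ℕ) < (t ⟨i + 1, h⟩ : ℕ) :=
      Fin.lt_def.mp (ht (Fin.mk_lt_mk.mpr (Nat.lt_succ_self i)))
    have h2 := Dn_succ σ i
    have h3 := Dn_le σ i
    have h4 : dbit σ i ≤ 1 := by unfold dbit; split_ifs <;> omega
    have h5 := le_t ht ⟨i, Nat.lt_of_succ_lt h⟩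
    show ((t ⟨i, Nat.lt_of_succ_lt h⟩ : ℕ) + Dn σ i) - i + dbit σ i ≤
      ((t ⟨i + 1, h⟩ : ℕ) + Dn σ (i + 1)) - (i + 1)
    simp only [Fin.val_mk] at h5
    omega
  · have hTl := (t ⟨n - 1, Nat.sub_lt hn Nat.one_pos⟩).isLt
    have h5 := le_t ht ⟨n - 1, Nat.sub_lt hn Nat.one_pos⟩
    simp only [Fin.val_mk] at h5
    have hDle := Dn_le σ (n - 1)
    have hfb : (if keyv σ ⟨n - 1, Nat.sub_lt hn Nat.one_pos⟩ ≠ 0 then 1 else 0) ≤ 1 := by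
      split_ifs <;> omega
    show ((t ⟨n - 1, Nat.sub_lt hn Nat.one_pos⟩ : ℕ) + Dn σ (n - 1)) - (n - 1) +
      (if keyv σ ⟨n - 1, Nat.sub_lt hn Nat.one_pos⟩ ≠ 0 then 1 else 0) ≤ c
    omega

/-- Equivalence between quotient chains and strictly monotone maps. -/
def E3 [NeZero p] (σ : ColoredPerm p n) (hn : 0 < n) (c : ℕ) :
    {q : Fin n → ℕ // Qcond σ c hn q} ≃
      {t : Fin n → Fin (n + c - descCP (invCP σ)) // StrictMono t} where
  toFun := fun qq => ⟨fun j => ⟨sOf σ qq.1 (j : ℕ), sOf_lt σ hn qq.2 (j : ℕ) j.isLt⟩, by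
    intro j1 j2 hlt
    rw [Fin.lt_def]
    exact chain_lt _ (sOf_step σ hn qq.2) (j1 : ℕ) (j2 : ℕ) hlt j2.isLt⟩
  invFun := fun tt => ⟨qOf σ tt.1, qOf_cond σ hn tt.2⟩
  left_inv := fun qq => by
    apply Subtype.ext
    funext j
    show ((sOf σ qq.1 (j : ℕ)) + Dn σ (j : ℕ)) - (j : ℕ) = qq.1 j
    unfold sOf
    rw [dif_pos j.isLt]
    simp only [Fin.eta]
    have := Dn_le σ (j : ℕ)
    omega
  right_inv := fun tt => by
    apply Subtype.ext
    funext j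
    apply Fin.ext
    show sOf σ (qOf σ tt.1) (j : ℕ) = (tt.1 j : ℕ)
    unfold sOf
    rw [dif_pos j.isLt]
    simp only [Fin.eta]
    unfold qOf
    have h1 := Dn_le σ (j : ℕ)
    have h2 := le_t tt.2 j
    omega

/-- Strictly monotone maps correspond to subsets. -/
def E4 (n m : ℕ) : {t : Fin n → Fin m // StrictMono t} ≃
    {s : Finset (Fin m) // s.card = n} where
  toFun := fun tt => ⟨Finset.univ.image tt.1, by
    rw [Finset.card_image_of_injective _ tt.2.injective, Finset.card_univ,
      Fintype.card_fin]⟩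
  invFun := fun ss => ⟨ss.1.orderEmbOfFin ss.2, (ss.1.orderEmbOfFin ss.2).strictMono⟩
  left_inv := fun tt => Subtype.ext
    (Finset.orderEmbOfFin_unique _
      (fun x => Finset.mem_image_of_mem _ (Finset.mem_univ x)) tt.2).symm
  right_inv := fun ss => Subtype.ext (by
    rw [← Finset.coe_inj, Finset.coe_image, Finset.coe_univ, Set.image_univ]
    exact Finset.range_orderEmbOfFin ss.1 ss.2)

theorem count_eq [NeZero p] (σ : ColoredPerm p n) (hb : 2 ≤ b) (hn : 1 ≤ n)
    (hdvd : p ∣ b - 1) :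
    Nat.card {A : Fin n → Fin b // Induces A σ} =
      (n + (b - 1) / p - descCP (invCP σ)).choose n := by
  have hp : 0 < p := NeZero.pos p
  set c := (b - 1) / p with hc
  have hpc : p * c = b - 1 := Nat.mul_div_cancel' hdvd
  have hb1 : b = p * c + 1 := by omega
  have e := (E1 σ (b := b)).trans ((E2 σ hn hp hb1).trans
    ((E3 σ hn c).trans (E4 n (n + c - descCP (invCP σ)))))
  rw [Nat.card_congr e, Nat.card_eq_fintype_card, Fintype.card_finset_len,
    Fintype.card_fin]


end ShuffleAux

/-- for `p ∣ b - 1` and `c = (b-1)/p`, the probability that a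
uniformly random array `A ∈ {0,...,b-1}^n` induces the colored permutation `σ`
under the `(b,n,p)`-shuffle equals `b^{-n}·binom(n + c - d(σ⁻¹), n)`. -/
theorem shuffle_probability (p n b : ℕ) [NeZero p] (hb : 2 ≤ b) (hn : 1 ≤ n)
    (hdvd : p ∣ b - 1) (σ : ColoredPerm p n) :
    (Nat.card {A : Fin n → Fin b // Induces A σ} : ℝ) / b ^ n =
      (b : ℝ) ^ (-(n : ℤ)) *
        ((n + (b - 1) / p - descCP (invCP σ)).choose n : ℝ) := by
  have hcount := ShuffleAux.count_eq σ hb hn hdvd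
  rw [hcount, zpow_neg, zpow_natCast]
  ring
end

section
/- Let p ≥ 1 be an integer and let E_p(n,k) be the number of elements of the colored permutation group G_{p,n} with exactly k descents, and F_p(n,k) the number with exactly k dash-descents. Then F_p satisfies the recursion F_p(n,k) = (pk+p-1)·F_p(n-1,k) + (p(n-k)+1)·F_p(n-1,k-1), and for p ≠ 1, F_p(n,k) = E_p(n, n-k). -/
/-- The rank of `(σ(i), σ^c(i))` in the dash-order
`(1,0)<'⋯<'(n,0)<'(1,1)<'⋯<'(n,1)<'⋯<'(1,p-1)<'⋯<'(n,p-1)`. -/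
def kvCP' {p n : ℕ} (σ : ColoredPerm p n) (i : ℕ) : ℕ :=
  if h : i < n then (σ.color ⟨i, h⟩).val * n + (σ.perm ⟨i, h⟩ : ℕ) else 0

/-- The number of dash-descents of a colored permutation: a dash-descent at
`i ∈ {1,...,n-1}` iff `(σ(i),σ^c(i)) >' (σ(i+1),σ^c(i+1))`, and a dash-descent at
`n` iff `σ^c(n) = p - 1`. -/
def descCP' {p n : ℕ} (σ : ColoredPerm p n) : ℕ :=
  ((Finset.range (n - 1)).filter fun i => kvCP' σ (i + 1) < kvCP' σ i).card
    + (if h : 0 < n then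
        (if σ.color ⟨n - 1, Nat.sub_lt h Nat.one_pos⟩ = ((p - 1 : ℕ) : ZMod p)
          then 1 else 0)
      else 0)

/-- `E_p(n,k)`: the number of elements of `G_{p,n}` with exactly `k` descents. -/
noncomputable def Ecount (p n k : ℕ) : ℕ := Nat.card {σ : ColoredPerm p n // descCP σ = k}

/-- `F_p(n,k)`: the number of elements of `G_{p,n}` with exactly `k` dash-descents. -/
noncomputable def Fcount (p n k : ℕ) : ℕ := Nat.card {σ : ColoredPerm p n // descCP' σ = k}

namespace DashProof
open Finset

variable {p n m : ℕ}

theorem ColoredPerm.ext' {σ τ : ColoredPerm p n} (h1 : σ.perm = τ.perm)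
    (h2 : σ.color = τ.color) : σ = τ := by
  cases σ; cases τ; simp_all

def cpEquiv : ColoredPerm p n ≃ Equiv.Perm (Fin n) × (Fin n → ZMod p) where
  toFun σ := (σ.perm, σ.color)
  invFun x := ⟨x.1, x.2⟩
  left_inv := fun ⟨a, b⟩ => rfl
  right_inv := fun x => rfl

instance [NeZero p] : Fintype (ColoredPerm p n) := Fintype.ofEquiv _ cpEquiv.symm

/-! ### Part 2 : complementation -/

/-- color complement helper -/
lemma gval_add_one [NeZero p] (c : ZMod p) :
    (if c + 1 = 0 then 0 else p - (c + 1).val) = p - 1 - c.val := by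
  have hv : c.val < p := ZMod.val_lt c
  have hc : ((c.val : ℕ) : ZMod p) = c := ZMod.natCast_rightInverse c
  have h1 : c + 1 = (((c.val + 1 : ℕ)) : ZMod p) := by push_cast [hc]; ring
  have h2 : (c + 1).val = (c.val + 1) % p := by rw [h1, ZMod.val_natCast]
  have h0 : (c + 1 = 0) ↔ ((c.val + 1) % p = 0) := by
    rw [← ZMod.val_eq_zero, h2]
  rcases eq_or_lt_of_le (Nat.succ_le_of_lt hv) with h | h
  · have : (c.val + 1) % p = 0 := by simp [← h]
    rw [if_pos (h0.mpr this)]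
    omega
  · have hm : (c.val + 1) % p = c.val + 1 := Nat.mod_eq_of_lt h
    have : ¬ (c + 1 = 0) := by rw [h0, hm]; omega
    rw [if_neg this, h2, hm]
    omega

lemma neg_one_eq [NeZero p] : ((p - 1 : ℕ) : ZMod p) = -1 := by
  have hp : 1 ≤ p := Nat.one_le_iff_ne_zero.mpr (NeZero.ne p)
  have : ((p : ℕ) : ZMod p) = 0 := ZMod.natCast_self p
  rw [Nat.cast_sub hp, this, Nat.cast_one, zero_sub]

/-- the complementation map -/
def comp [NeZero p] (σ : ColoredPerm p n) : ColoredPerm p n :=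
  ⟨σ.perm.trans (Fin.revPerm), fun i => σ.color i + 1⟩

lemma kv_comp_add [NeZero p] (σ : ColoredPerm p n) (i : ℕ) (hi : i < n) :
    kvCP (comp σ) i + kvCP' σ i = p * n - 1 := by
  have hv : (σ.color ⟨i, hi⟩).val < p := ZMod.val_lt _
  have hs : (σ.perm ⟨i, hi⟩ : ℕ) < n := (σ.perm ⟨i, hi⟩).is_lt
  simp only [kvCP, kvCP', comp, dif_pos hi]
  show (if σ.color ⟨i, hi⟩ + 1 = 0 then 0 else p - (σ.color ⟨i, hi⟩ + 1).val) * n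
      + (Fin.rev (σ.perm ⟨i, hi⟩) : ℕ) + _ = _
  rw [gval_add_one, Fin.val_rev]
  have hp : 1 ≤ p := Nat.one_le_iff_ne_zero.mpr (NeZero.ne p)
  set v := (σ.color ⟨i, hi⟩).val with hvdef
  set s := (σ.perm ⟨i, hi⟩ : ℕ) with hsdef
  have key : (p - 1 - v) * n + v * n = (p - 1) * n := by
    rw [← Nat.add_mul]; congr 1; omega
  have key2 : (p - 1) * n + n = p * n := by
    have h3 : (p - 1 + 1) * n = p * n := by rw [Nat.sub_add_cancel hp]
    rw [Nat.add_mul, one_mul] at h3; omega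
  omega

lemma kv'_lt [NeZero p] (σ : ColoredPerm p n) (i : ℕ) (hi : i < n) : kvCP' σ i < p * n := by
  have hv : (σ.color ⟨i, hi⟩).val < p := ZMod.val_lt _
  have hs : (σ.perm ⟨i, hi⟩ : ℕ) < n := (σ.perm ⟨i, hi⟩).is_lt
  simp only [kvCP', dif_pos hi]
  calc (σ.color ⟨i, hi⟩).val * n + (σ.perm ⟨i, hi⟩ : ℕ)
      < (σ.color ⟨i, hi⟩).val * n + n := by omega
    _ = ((σ.color ⟨i, hi⟩).val + 1) * n := by ring
    _ ≤ p * n := Nat.mul_le_mul_right n (by omega)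

lemma kv'_ne (σ : ColoredPerm p n) (i : ℕ) (h : i + 1 < n) :
    kvCP' σ (i + 1) ≠ kvCP' σ i := by
  have h' : i < n := by omega
  simp only [kvCP', dif_pos h, dif_pos h']
  intro heq
  have hs1 : (σ.perm ⟨i + 1, h⟩ : ℕ) < n := (σ.perm _).is_lt
  have hs2 : (σ.perm ⟨i, h'⟩ : ℕ) < n := (σ.perm _).is_lt
  have hmod := congrArg (· % n) heq
  simp only [Nat.mul_add_mod'] at hmod
  rw [Nat.mod_eq_of_lt hs1, Nat.mod_eq_of_lt hs2] at hmod
  have : σ.perm ⟨i + 1, h⟩ = σ.perm ⟨i, h'⟩ := Fin.ext hmod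
  have := σ.perm.injective this
  simp [Fin.ext_iff] at this

lemma desc_comp_add [NeZero p] (σ : ColoredPerm p n) :
    descCP (comp σ) + descCP' σ = n := by
  rcases n with _ | N
  · simp [descCP, descCP']
  · unfold descCP descCP'
    rw [Finset.card_filter, Finset.card_filter]
    have hlast : (0:ℕ) < N + 1 := Nat.succ_pos N
    rw [dif_pos hlast, dif_pos hlast]
    have pointwise : ∀ i ∈ Finset.range (N + 1 - 1),
        ((if kvCP (comp σ) (i + 1) < kvCP (comp σ) i then 1 else 0) : ℕ)
          + (if kvCP' σ (i + 1) < kvCP' σ i then 1 else 0) = 1 := by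
      intro i hi
      have hi' : i + 1 < N + 1 := by simpa using Finset.mem_range.mp hi
      have hi'' : i < N + 1 := by omega
      have e1 := kv_comp_add σ (i + 1) hi'
      have e2 := kv_comp_add σ i hi''
      have e3 := kv'_ne σ i hi'
      have b1 := kv'_lt σ (i + 1) hi'
      have b2 := kv'_lt σ i hi''
      split_ifs <;> omega
    have hsum : (∑ i ∈ Finset.range (N + 1 - 1),
          ((if kvCP (comp σ) (i + 1) < kvCP (comp σ) i then 1 else 0) : ℕ))
        + (∑ i ∈ Finset.range (N + 1 - 1), ((if kvCP' σ (i + 1) < kvCP' σ i then 1 else 0) : ℕ)) = N := by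
      rw [← Finset.sum_add_distrib]
      rw [Finset.sum_congr rfl pointwise]
      simp
    have hfin : ((if (comp σ).color ⟨N + 1 - 1, Nat.sub_lt hlast Nat.one_pos⟩ ≠ 0 then 1 else 0) : ℕ)
        + (if σ.color ⟨N + 1 - 1, Nat.sub_lt hlast Nat.one_pos⟩ = ((p - 1 : ℕ) : ZMod p) then 1 else 0) = 1 := by
      have hcc : (comp σ).color ⟨N + 1 - 1, Nat.sub_lt hlast Nat.one_pos⟩
          = σ.color ⟨N + 1 - 1, Nat.sub_lt hlast Nat.one_pos⟩ + 1 := rfl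
      rw [hcc, neg_one_eq]
      set d := σ.color ⟨N + 1 - 1, Nat.sub_lt hlast Nat.one_pos⟩
      have : d + 1 = 0 ↔ d = -1 := by
        constructor
        · intro h; linear_combination h
        · intro h; rw [h]; ring
      split_ifs with h1 h2 h2 <;> simp_all
    omega

def compEquiv [NeZero p] : ColoredPerm p n ≃ ColoredPerm p n where
  toFun := comp
  invFun σ := ⟨σ.perm.trans Fin.revPerm, fun i => σ.color i - 1⟩
  left_inv σ := by
    apply ColoredPerm.ext'
    · ext x
      simp [comp, Fin.revPerm]
    · funext i; simp [comp]
  right_inv σ := by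
    apply ColoredPerm.ext'
    · ext x
      simp [comp, Fin.revPerm]
    · funext i; simp [comp]

theorem part2 [NeZero p] (hk : m ≤ n) : Fcount p n m = Ecount p n (n - m) := by
  apply Nat.card_congr
  refine Equiv.subtypeEquiv (compEquiv) fun σ => ?_
  have h := desc_comp_add σ
  have h2 : descCP (compEquiv σ) = descCP (comp σ) := rfl
  rw [h2]
  constructor
  · intro hh; omega
  · intro hh; omega

/-! ### Part 1 : insertion -/

def ins [NeZero p] (τ : ColoredPerm p m) (j : Fin (m + 1)) (c : ZMod p) :
    ColoredPerm p (m + 1) where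
  perm := (finSuccEquiv' j).trans ((Equiv.optionCongr τ.perm).trans
    (finSuccEquiv' (Fin.last m)).symm)
  color := fun i => (finSuccEquiv' j i).elim c τ.color

variable [NeZero p]

@[simp] lemma ins_perm_self (τ : ColoredPerm p m) (j : Fin (m + 1)) (c : ZMod p) :
    (ins τ j c).perm j = Fin.last m := by
  simp [ins, finSuccEquiv'_at]

@[simp] lemma ins_perm_succAbove (τ : ColoredPerm p m) (j : Fin (m + 1)) (c : ZMod p)
    (i : Fin m) : (ins τ j c).perm (j.succAbove i) = (τ.perm i).castSucc := by
  simp only [ins, Equiv.trans_apply, finSuccEquiv'_succAbove, Equiv.optionCongr_apply,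
    Option.map_some, finSuccEquiv'_symm_some]
  rw [Fin.succAbove_last]

@[simp] lemma ins_color_self (τ : ColoredPerm p m) (j : Fin (m + 1)) (c : ZMod p) :
    (ins τ j c).color j = c := by
  simp [ins, finSuccEquiv'_at]

@[simp] lemma ins_color_succAbove (τ : ColoredPerm p m) (j : Fin (m + 1)) (c : ZMod p)
    (i : Fin m) : (ins τ j c).color (j.succAbove i) = τ.color i := by
  simp [ins, finSuccEquiv'_succAbove]

lemma ins_bijective :
    Function.Bijective (fun x : ColoredPerm p m × Fin (m + 1) × ZMod p =>
      ins x.1 x.2.1 x.2.2) := by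
  constructor
  · rintro ⟨τ, j, c⟩ ⟨τ', j', c'⟩ h
    simp only at h
    have hj : j = j' := by
      have h1 : (ins τ j c).perm j = Fin.last m := ins_perm_self τ j c
      have h2 : (ins τ' j' c').perm j' = Fin.last m := ins_perm_self τ' j' c'
      rw [h] at h1
      exact (ins τ' j' c').perm.injective (h1.trans h2.symm)
    subst hj
    have hc : c = c' := by
      have h1 := ins_color_self τ j c
      have h2 := ins_color_self τ' j c'
      rw [h] at h1; exact h1.symm.trans h2
    have hτ : τ = τ' := by
      apply ColoredPerm.ext'
      · apply Equiv.ext; intro i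
        have h1 := ins_perm_succAbove τ j c i
        have h2 := ins_perm_succAbove τ' j c' i
        rw [h] at h1
        exact Fin.castSucc_injective m (h1.symm.trans h2)
      · funext i
        have h1 := ins_color_succAbove τ j c i
        have h2 := ins_color_succAbove τ' j c' i
        rw [h] at h1
        exact h1.symm.trans h2
    rw [hτ, hc]
  · intro σ
    set j := σ.perm.symm (Fin.last m) with hjdef
    have hj : σ.perm j = Fin.last m := σ.perm.apply_symm_apply _
    have hne : ∀ i : Fin m, σ.perm (j.succAbove i) ≠ Fin.last m := by
      intro i h
      have : j.succAbove i = j := σ.perm.injective (h.trans hj.symm)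
      exact Fin.succAbove_ne j i this
    set g : Fin m → Fin m := fun i => (σ.perm (j.succAbove i)).castPred (hne i) with hgdef
    have hginj : Function.Injective g := by
      intro a b hab
      have : σ.perm (j.succAbove a) = σ.perm (j.succAbove b) := by
        rw [← Fin.castSucc_castPred _ (hne a), ← Fin.castSucc_castPred _ (hne b)]
        exact congrArg Fin.castSucc hab
      exact (Fin.succAbove_right_injective (p := j)) (σ.perm.injective this)
    have hgbij : Function.Bijective g := Finite.injective_iff_bijective.mp hginj
    refine ⟨⟨⟨Equiv.ofBijective g hgbij, fun i => σ.color (j.succAbove i)⟩, j, σ.color j⟩, ?_⟩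
    apply ColoredPerm.ext'
    · apply Equiv.ext; intro x
      rcases eq_or_ne x j with rfl | hx
      · simpa using hj.symm
      · obtain ⟨i, rfl⟩ := Fin.exists_succAbove_eq hx
        simp only [ins_perm_succAbove]
        show ((Equiv.ofBijective g hgbij) i).castSucc = _
        rw [Equiv.ofBijective_apply, hgdef]
        exact Fin.castSucc_castPred _ (hne i)
    · funext x
      rcases eq_or_ne x j with rfl | hx
      · simp
      · obtain ⟨i, rfl⟩ := Fin.exists_succAbove_eq hx
        simp

/-! ### ranks after insertion -/

def Kf (τ : ColoredPerm p m) (c : ZMod p) (i : ℕ) : ℕ :=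
  if h : i < m then (τ.color ⟨i, h⟩).val * (m + 1) + (τ.perm ⟨i, h⟩ : ℕ)
  else c.val * (m + 1) + m

lemma lex_lt {M d1 d2 s1 s2 : ℕ} (h1 : s1 < M) (h2 : s2 < M) :
    d1 * M + s1 < d2 * M + s2 ↔ d1 < d2 ∨ (d1 = d2 ∧ s1 < s2) := by
  have hm : ∀ a b s t : ℕ, s < M → t < M → a < b → a * M + s < b * M + t := by
    intro a b s t hs ht hab
    have h3 : (a + 1) * M ≤ b * M := Nat.mul_le_mul_right M hab
    have h4 : (a + 1) * M = a * M + M := by ring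
    omega
  constructor
  · intro h
    rcases lt_trichotomy d1 d2 with hlt | heq | hgt
    · exact Or.inl hlt
    · subst heq; right; exact ⟨rfl, by omega⟩
    · exfalso; have := hm d2 d1 s2 s1 h2 h1 hgt; omega
  · rintro (hlt | ⟨rfl, hs⟩)
    · exact hm _ _ _ _ h1 h2 hlt
    · omega

lemma Kf_lt_iff (τ : ColoredPerm p m) (c : ZMod p) {a b : ℕ} (ha : a < m) (hb : b < m) :
    (Kf τ c a < Kf τ c b ↔ kvCP' τ a < kvCP' τ b) := by
  have hsa : (τ.perm ⟨a, ha⟩ : ℕ) < m := (τ.perm _).is_lt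
  have hsb : (τ.perm ⟨b, hb⟩ : ℕ) < m := (τ.perm _).is_lt
  simp only [Kf, kvCP', dif_pos ha, dif_pos hb]
  rw [lex_lt (by omega) (by omega), lex_lt hsa hsb]

lemma Kf_top_lt (τ : ColoredPerm p m) (c : ZMod p) {a : ℕ} (ha : a < m) :
    (Kf τ c m < Kf τ c a ↔ c.val < (τ.color ⟨a, ha⟩).val) := by
  have hsa : (τ.perm ⟨a, ha⟩ : ℕ) < m := (τ.perm _).is_lt
  simp only [Kf, dif_pos ha, dif_neg (lt_irrefl m)]
  rw [lex_lt (by omega) (by omega)]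
  omega

lemma Kf_lt_top (τ : ColoredPerm p m) (c : ZMod p) {a : ℕ} (ha : a < m) :
    (Kf τ c a < Kf τ c m ↔ (τ.color ⟨a, ha⟩).val ≤ c.val) := by
  have hsa : (τ.perm ⟨a, ha⟩ : ℕ) < m := (τ.perm _).is_lt
  simp only [Kf, dif_pos ha, dif_neg (lt_irrefl m)]
  rw [lex_lt (by omega) (by omega)]
  omega

lemma succAbove_mk_of_lt (j : Fin (m + 1)) (i : ℕ) (him : i < m) (h : i < j.val) :
    j.succAbove ⟨i, him⟩ = ⟨i, by omega⟩ := by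
  rw [Fin.succAbove_of_castSucc_lt _ _ (by simp [Fin.lt_def, h])]
  rfl

lemma succAbove_mk_of_ge (j : Fin (m + 1)) (i : ℕ) (him : i < m) (h : j.val ≤ i) :
    j.succAbove ⟨i, him⟩ = ⟨i + 1, by omega⟩ := by
  rw [Fin.succAbove_of_le_castSucc _ _ (by simp [Fin.le_def, h])]
  rfl

lemma kv_ins (τ : ColoredPerm p m) (j : Fin (m + 1)) (c : ZMod p) (i : ℕ) (hi : i ≤ m) :
    kvCP' (ins τ j c) i
      = Kf τ c (if i < j.val then i else if i = j.val then m else i - 1) := by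
  have hin : i < m + 1 := by omega
  rcases lt_trichotomy i j.val with h | h | h
  · have him : i < m := by have := j.is_lt; omega
    have hpos : (⟨i, hin⟩ : Fin (m + 1)) = j.succAbove ⟨i, him⟩ :=
      (succAbove_mk_of_lt j i him h).symm
    rw [if_pos h]
    simp only [kvCP', dif_pos hin, Kf, dif_pos him, hpos, ins_color_succAbove,
      ins_perm_succAbove, Fin.coe_castSucc]
  · have hpos : (⟨i, hin⟩ : Fin (m + 1)) = j := Fin.ext h
    rw [if_neg (by omega), if_pos h]
    simp only [kvCP', dif_pos hin, hpos, ins_color_self, ins_perm_self, Fin.val_last,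
      Kf, dif_neg (lt_irrefl m)]
  · have him : i - 1 < m := by omega
    have hpos : (⟨i, hin⟩ : Fin (m + 1)) = j.succAbove ⟨i - 1, him⟩ := by
      rw [succAbove_mk_of_ge j (i - 1) him (by omega)]
      exact Fin.ext (show i = i - 1 + 1 by omega)
    rw [if_neg (by omega), if_neg (by omega)]
    simp only [kvCP', dif_pos hin, hpos, ins_color_succAbove, ins_perm_succAbove,
      Fin.coe_castSucc, Kf, dif_pos him]

lemma descCP'_succ (σ : ColoredPerm p (m + 1)) :
    descCP' σ = ∑ i ∈ Finset.range m, (if kvCP' σ (i + 1) < kvCP' σ i then 1 else 0)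
      + (if σ.color ⟨m, Nat.lt_succ_self m⟩ = ((p - 1 : ℕ) : ZMod p) then 1 else 0) := by
  unfold descCP'
  rw [Finset.card_filter, dif_pos (Nat.succ_pos m)]
  simp

lemma descCP'_pos (τ : ColoredPerm p (m + 1)) (hm : True) :
    descCP' τ = ∑ i ∈ Finset.range m, (if kvCP' τ (i + 1) < kvCP' τ i then 1 else 0)
      + (if τ.color ⟨m, Nat.lt_succ_self m⟩ = ((p - 1 : ℕ) : ZMod p) then 1 else 0) :=
  descCP'_succ τ

lemma descCP'_zero (τ : ColoredPerm p 0) : descCP' τ = 0 := by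
  unfold descCP'
  simp

/-! ### sum helpers -/

lemma sum_insert1 (f g : ℕ → ℕ) (M : ℕ)
    (hhigh : ∀ i, 0 < i → i ≤ M → f i = g (i - 1)) :
    ∑ i ∈ Finset.range (M + 1), f i = ∑ i ∈ Finset.range M, g i + f 0 := by
  rw [Finset.sum_range_succ']
  congr 1
  apply Finset.sum_congr rfl
  intro i hi
  have := hhigh (i + 1) (by omega) (by simpa using Finset.mem_range.mp hi)
  simpa using this

lemma sum_insert2 (f g : ℕ → ℕ) (J M : ℕ) (hJ : J < M)
    (hlow : ∀ i, i < J → f i = g i)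
    (hhigh : ∀ i, J + 1 < i → i ≤ M → f i = g (i - 1)) :
    ∑ i ∈ Finset.range (M + 1), f i + g J
      = ∑ i ∈ Finset.range M, g i + f J + f (J + 1) := by
  induction M with
  | zero => omega
  | succ M ih =>
    rcases eq_or_lt_of_le (Nat.lt_succ_iff.mp hJ) with rfl | hJM
    · rw [Finset.sum_range_succ (n := J + 1), Finset.sum_range_succ (n := J),
        Finset.sum_range_succ (n := J)]
      have : ∑ i ∈ Finset.range J, f i = ∑ i ∈ Finset.range J, g i :=
        Finset.sum_congr rfl fun i hi => hlow i (Finset.mem_range.mp hi)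
      omega
    · rw [Finset.sum_range_succ (f := f) (n := M + 1), Finset.sum_range_succ (f := g) (n := M)]
      have hfM : f (M + 1) = g M := by
        have := hhigh (M + 1) (by omega) (by omega)
        simpa using this
      have := ih hJM (fun i h1 h2 => hhigh i h1 (by omega))
      omega

/-! ### the three case lemmas -/

lemma kv_ins' (τ : ColoredPerm p m) (J : ℕ) (hJ : J < m + 1) (c : ZMod p) (i : ℕ)
    (hi : i ≤ m) :
    kvCP' (ins τ ⟨J, hJ⟩ c) i
      = Kf τ c (if i < J then i else if i = J then m else i - 1) :=
  kv_ins τ ⟨J, hJ⟩ c i hi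

lemma kv_ins_lt (τ : ColoredPerm p m) {J : ℕ} (hJ : J < m + 1) (c : ZMod p) {i : ℕ}
    (hi : i < J) : kvCP' (ins τ ⟨J, hJ⟩ c) i = Kf τ c i :=
  (kv_ins' τ J hJ c i (by omega)).trans (by rw [if_pos hi])

lemma kv_ins_eq (τ : ColoredPerm p m) {J : ℕ} (hJ : J < m + 1) (c : ZMod p) :
    kvCP' (ins τ ⟨J, hJ⟩ c) J = Kf τ c m :=
  (kv_ins' τ J hJ c J (by omega)).trans (by rw [if_neg (lt_irrefl J), if_pos rfl])

lemma kv_ins_gt (τ : ColoredPerm p m) {J : ℕ} (hJ : J < m + 1) (c : ZMod p) {i : ℕ}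
    (hi : J < i) (him : i ≤ m) : kvCP' (ins τ ⟨J, hJ⟩ c) i = Kf τ c (i - 1) :=
  (kv_ins' τ J hJ c i him).trans (by rw [if_neg (by omega), if_neg (by omega)])

lemma desc_ins_mid0 (τ : ColoredPerm p m) (c : ZMod p) (hm : 0 < m) (h0 : 0 < m + 1) :
    descCP' (ins τ ⟨0, h0⟩ c)
      = descCP' τ + (if (τ.color ⟨0, hm⟩).val ≤ c.val then 1 else 0) := by
  obtain ⟨M, rfl⟩ : ∃ M, m = M + 1 := ⟨m - 1, by omega⟩
  rw [descCP'_succ, descCP'_succ τ]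
  have hfin : (ins τ ⟨0, h0⟩ c).color ⟨M + 1, Nat.lt_succ_self _⟩
      = τ.color ⟨M, Nat.lt_succ_self M⟩ := by
    have h1 : (⟨0, h0⟩ : Fin (M + 2)).succAbove ⟨M, Nat.lt_succ_self M⟩
        = ⟨M + 1, by omega⟩ := succAbove_mk_of_ge _ M _ (by exact Nat.zero_le M)
    rw [← h1, ins_color_succAbove]
  rw [hfin]
  have key := sum_insert1
    (fun i => if kvCP' (ins τ ⟨0, h0⟩ c) (i + 1)
      < kvCP' (ins τ ⟨0, h0⟩ c) i then 1 else 0)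
    (fun i => if kvCP' τ (i + 1) < kvCP' τ i then 1 else 0) M
    (fun i hi0 hM => by
      rw [kv_ins_gt τ h0 c (show 0 < i + 1 by omega) (by omega),
        kv_ins_gt τ h0 c hi0 (by omega)]
      rw [show i + 1 - 1 = (i - 1) + 1 by omega]
      exact if_congr (Kf_lt_iff τ c (by omega) (by omega)) rfl rfl)
  rw [key]
  have hnew : (if kvCP' (ins τ ⟨0, h0⟩ c) (0 + 1)
        < kvCP' (ins τ ⟨0, h0⟩ c) 0 then 1 else 0)
      = (if (τ.color ⟨0, hm⟩).val ≤ c.val then 1 else 0) := by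
    rw [kv_ins_gt τ h0 c (show (0:ℕ) < 0 + 1 by omega) (by omega),
      kv_ins_eq τ h0 c]
    rw [show (0 : ℕ) + 1 - 1 = 0 from rfl]
    exact if_congr (Kf_lt_top τ c (by omega)) rfl rfl
  rw [hnew]
  omega

lemma desc_ins_midpos (τ : ColoredPerm p m) (c : ZMod p) (J : ℕ) (hJ : J + 1 < m)
    (hJ2 : J + 1 < m + 1) (hJm : J < m) :
    descCP' (ins τ ⟨J + 1, hJ2⟩ c)
        + (if kvCP' τ (J + 1) < kvCP' τ J then 1 else 0)
      = descCP' τ + (if c.val < (τ.color ⟨J, hJm⟩).val then 1 else 0)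
        + (if (τ.color ⟨J + 1, hJ⟩).val ≤ c.val then 1 else 0) := by
  obtain ⟨M, rfl⟩ : ∃ M, m = M + 1 := ⟨m - 1, by omega⟩
  have hJM : J < M := by omega
  rw [descCP'_succ, descCP'_succ τ]
  have hfin : (ins τ ⟨J + 1, hJ2⟩ c).color ⟨M + 1, Nat.lt_succ_self _⟩
      = τ.color ⟨M, Nat.lt_succ_self M⟩ := by
    have h1 : (⟨J + 1, hJ2⟩ : Fin (M + 2)).succAbove ⟨M, Nat.lt_succ_self M⟩
        = ⟨M + 1, by omega⟩ := succAbove_mk_of_ge _ M _ (by simpa using hJM)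
    rw [← h1, ins_color_succAbove]
  rw [hfin]
  have key := sum_insert2
    (fun i => if kvCP' (ins τ ⟨J + 1, hJ2⟩ c) (i + 1)
      < kvCP' (ins τ ⟨J + 1, hJ2⟩ c) i then 1 else 0)
    (fun i => if kvCP' τ (i + 1) < kvCP' τ i then 1 else 0) J M (by omega)
    (fun i hi => by
      rw [kv_ins_lt τ hJ2 c (show i + 1 < J + 1 by omega),
        kv_ins_lt τ hJ2 c (show i < J + 1 by omega)]
      exact if_congr (Kf_lt_iff τ c (by omega) (by omega)) rfl rfl)
    (fun i h1 h2 => by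
      rw [kv_ins_gt τ hJ2 c (show J + 1 < i + 1 by omega) (by omega),
        kv_ins_gt τ hJ2 c (show J + 1 < i by omega) (by omega)]
      rw [show i + 1 - 1 = (i - 1) + 1 by omega]
      exact if_congr (Kf_lt_iff τ c (by omega) (by omega)) rfl rfl)
  have hFJ : (if kvCP' (ins τ ⟨J + 1, hJ2⟩ c) (J + 1) < kvCP' (ins τ ⟨J + 1, hJ2⟩ c) J
        then 1 else 0)
      = (if c.val < (τ.color ⟨J, hJm⟩).val then 1 else 0) := by
    rw [kv_ins_eq τ hJ2 c, kv_ins_lt τ hJ2 c (show J < J + 1 by omega)]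
    exact if_congr (Kf_top_lt τ c (by omega)) rfl rfl
  have hFJ1 : (if kvCP' (ins τ ⟨J + 1, hJ2⟩ c) (J + 1 + 1)
        < kvCP' (ins τ ⟨J + 1, hJ2⟩ c) (J + 1) then 1 else 0)
      = (if (τ.color ⟨J + 1, hJ⟩).val ≤ c.val then 1 else 0) := by
    rw [kv_ins_gt τ hJ2 c (show J + 1 < J + 1 + 1 by omega) (by omega), kv_ins_eq τ hJ2 c]
    rw [show J + 1 + 1 - 1 = J + 1 by omega]
    exact if_congr (Kf_lt_top τ c (by omega)) rfl rfl
  rw [hFJ, hFJ1] at key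
  omega

lemma desc_ins_last {M : ℕ} (τ : ColoredPerm p (M + 1)) (c : ZMod p)
    (h1 : M < M + 1) (h2 : M + 1 < M + 2) :
    descCP' (ins τ ⟨M + 1, h2⟩ c)
        + (if τ.color ⟨M, h1⟩ = ((p - 1 : ℕ) : ZMod p) then 1 else 0)
      = descCP' τ + (if c.val < (τ.color ⟨M, h1⟩).val then 1 else 0)
        + (if c = ((p - 1 : ℕ) : ZMod p) then 1 else 0) := by
  rw [descCP'_succ, descCP'_succ τ]
  have hfin : (ins τ ⟨M + 1, h2⟩ c).color ⟨M + 1, Nat.lt_succ_self _⟩ = c :=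
    ins_color_self τ _ c
  rw [hfin]
  have hsum : ∑ i ∈ Finset.range (M + 1),
        (if kvCP' (ins τ ⟨M + 1, h2⟩ c) (i + 1)
          < kvCP' (ins τ ⟨M + 1, h2⟩ c) i then 1 else 0)
      = ∑ i ∈ Finset.range M, (if kvCP' τ (i + 1) < kvCP' τ i then 1 else 0)
        + (if c.val < (τ.color ⟨M, h1⟩).val then 1 else 0) := by
    rw [Finset.sum_range_succ]
    congr 1
    · apply Finset.sum_congr rfl
      intro i hi
      have hiM : i < M := Finset.mem_range.mp hi
      rw [kv_ins_lt τ h2 c (show i + 1 < M + 1 by omega),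
        kv_ins_lt τ h2 c (show i < M + 1 by omega)]
      exact if_congr (Kf_lt_iff τ c (by omega) (by omega)) rfl rfl
    · rw [kv_ins_eq τ h2 c, kv_ins_lt τ h2 c (show M < M + 1 by omega)]
      exact if_congr (Kf_top_lt τ c (by omega)) rfl rfl
  rw [hsum]
  omega

lemma desc_ins_empty (τ : ColoredPerm p 0) (j : Fin 1) (c : ZMod p) :
    descCP' (ins τ j c) = (if c = ((p - 1 : ℕ) : ZMod p) then 1 else 0) := by
  rw [descCP'_succ]
  have hj : j = ⟨0, Nat.succ_pos 0⟩ := Subsingleton.elim _ _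
  have hfin : (ins τ j c).color ⟨0, Nat.lt_succ_self _⟩ = c := by
    rw [hj]; exact ins_color_self τ _ c
  rw [hfin]
  simp

/-! ### counting colors -/

lemma ceqtop_iff (c : ZMod p) : c = ((p - 1 : ℕ) : ZMod p) ↔ c.val = p - 1 := by
  constructor
  · intro h
    rw [h, ZMod.val_natCast_of_lt (by have := NeZero.pos p; omega)]
  · intro h
    rw [← h]
    exact (ZMod.natCast_rightInverse c).symm

lemma sum_zmod_eq_range (f : ℕ → ℕ) :
    ∑ c : ZMod p, f c.val = ∑ i ∈ Finset.range p, f i := by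
  rcases p with _ | q
  · exact absurd rfl (NeZero.ne 0)
  · exact Fin.sum_univ_eq_sum_range f (q + 1)

lemma card_c_lt (d : ℕ) : (∑ c : ZMod p, if c.val < d then 1 else 0) = min d p := by
  have h := sum_zmod_eq_range (p := p) (fun v => if v < d then 1 else 0)
  rw [h, ← Finset.card_filter]
  have : (Finset.range p).filter (fun i => i < d) = Finset.range (min d p) := by
    ext x; simp [Finset.mem_filter, Finset.mem_range]; omega
  rw [this, Finset.card_range]

lemma card_c_ge (d : ℕ) : (∑ c : ZMod p, if d ≤ c.val then 1 else 0) = p - d := by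
  have h := sum_zmod_eq_range (p := p) (fun v => if d ≤ v then 1 else 0)
  rw [h, ← Finset.card_filter]
  have : (Finset.range p).filter (fun i => d ≤ i) = Finset.Ico d p ∪ ∅ := by
    ext x; simp [Finset.mem_filter, Finset.mem_range, Finset.mem_Ico]; omega
  rw [this, Finset.union_empty, Nat.card_Ico]

lemma card_c_top : (∑ c : ZMod p, if c = ((p - 1 : ℕ) : ZMod p) then 1 else 0) = 1 := by
  rw [Finset.sum_ite_eq' Finset.univ _ (fun _ => 1)]
  simp

/-! ### summing the case lemmas over the color -/

lemma sumc_mid0 (τ : ColoredPerm p m) (hm : 0 < m) (h0 : 0 < m + 1) :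
    (∑ c : ZMod p, descCP' (ins τ ⟨0, h0⟩ c)) + (τ.color ⟨0, hm⟩).val
      = p * descCP' τ + p := by
  rw [Finset.sum_congr rfl (fun c _ => desc_ins_mid0 τ c hm h0)]
  rw [Finset.sum_add_distrib, Finset.sum_const, Finset.card_univ, ZMod.card, smul_eq_mul,
    card_c_ge]
  have h1 := ZMod.val_lt (τ.color ⟨0, hm⟩)
  omega

lemma sumc_midpos (τ : ColoredPerm p m) (J : ℕ) (hJ : J + 1 < m) (hJ2 : J + 1 < m + 1)
    (hJm : J < m) :
    (∑ c : ZMod p, descCP' (ins τ ⟨J + 1, hJ2⟩ c))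
        + p * (if kvCP' τ (J + 1) < kvCP' τ J then 1 else 0)
        + (τ.color ⟨J + 1, hJ⟩).val
      = p * descCP' τ + (τ.color ⟨J, hJm⟩).val + p := by
  have key : ∑ c : ZMod p, (descCP' (ins τ ⟨J + 1, hJ2⟩ c)
        + (if kvCP' τ (J + 1) < kvCP' τ J then 1 else 0))
      = ∑ c : ZMod p, (descCP' τ + (if c.val < (τ.color ⟨J, hJm⟩).val then 1 else 0)
        + (if (τ.color ⟨J + 1, hJ⟩).val ≤ c.val then 1 else 0)) :=
    Finset.sum_congr rfl (fun c _ => desc_ins_midpos τ c J hJ hJ2 hJm)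
  rw [Finset.sum_add_distrib, Finset.sum_const, Finset.card_univ, ZMod.card, smul_eq_mul]
    at key
  rw [Finset.sum_add_distrib, Finset.sum_add_distrib, Finset.sum_const, Finset.card_univ,
    ZMod.card, smul_eq_mul, card_c_lt, card_c_ge] at key
  have h1 := ZMod.val_lt (τ.color ⟨J, hJm⟩)
  have h2 := ZMod.val_lt (τ.color ⟨J + 1, hJ⟩)
  have h3 : min ((τ.color ⟨J, hJm⟩).val) p = (τ.color ⟨J, hJm⟩).val := by omega
  rw [h3] at key
  omega

lemma sumc_last {M : ℕ} (τ : ColoredPerm p (M + 1)) (h1 : M < M + 1) (h2 : M + 1 < M + 2) :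
    (∑ c : ZMod p, descCP' (ins τ ⟨M + 1, h2⟩ c))
        + p * (if τ.color ⟨M, h1⟩ = ((p - 1 : ℕ) : ZMod p) then 1 else 0)
      = p * descCP' τ + (τ.color ⟨M, h1⟩).val + 1 := by
  have key : ∑ c : ZMod p, (descCP' (ins τ ⟨M + 1, h2⟩ c)
        + (if τ.color ⟨M, h1⟩ = ((p - 1 : ℕ) : ZMod p) then 1 else 0))
      = ∑ c : ZMod p, (descCP' τ + (if c.val < (τ.color ⟨M, h1⟩).val then 1 else 0)
        + (if c = ((p - 1 : ℕ) : ZMod p) then 1 else 0)) :=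
    Finset.sum_congr rfl (fun c _ => desc_ins_last τ c h1 h2)
  rw [Finset.sum_add_distrib, Finset.sum_const, Finset.card_univ, ZMod.card, smul_eq_mul]
    at key
  rw [Finset.sum_add_distrib, Finset.sum_add_distrib, Finset.sum_const, Finset.card_univ,
    ZMod.card, smul_eq_mul, card_c_lt, card_c_top] at key
  have h3 := ZMod.val_lt (τ.color ⟨M, h1⟩)
  have h4 : min ((τ.color ⟨M, h1⟩).val) p = (τ.color ⟨M, h1⟩).val := by omega
  rw [h4] at key
  omega

lemma sumc_empty (τ : ColoredPerm p 0) (j : Fin 1) :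
    (∑ c : ZMod p, descCP' (ins τ j c)) = 1 := by
  rw [Finset.sum_congr rfl (fun c _ => desc_ins_empty τ j c)]
  exact card_c_top

/-! ### membership : insertion changes the number of descents by 0 or 1 -/

lemma kv'_le_of_lt (τ : ColoredPerm p m) {a b : ℕ} (ha : a < m) (hb : b < m)
    (h : kvCP' τ a < kvCP' τ b) : (τ.color ⟨a, ha⟩).val ≤ (τ.color ⟨b, hb⟩).val := by
  simp only [kvCP', dif_pos ha, dif_pos hb] at h
  rw [lex_lt (τ.perm _).is_lt (τ.perm _).is_lt] at h
  omega

lemma desc_ins_mem (τ : ColoredPerm p m) (j : Fin (m + 1)) (c : ZMod p) :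
    descCP' (ins τ j c) = descCP' τ ∨ descCP' (ins τ j c) = descCP' τ + 1 := by
  rcases m with _ | M
  · rw [desc_ins_empty τ j c, descCP'_zero τ]
    split_ifs <;> simp
  · rcases j with ⟨J, hJlt⟩
    rcases J with _ | J'
    · rw [desc_ins_mid0 τ c (Nat.succ_pos M) hJlt]
      split_ifs <;> omega
    · rcases eq_or_lt_of_le (Nat.lt_succ_iff.mp hJlt) with heq | hlt
      · obtain rfl : M = J' := by omega
        have key := desc_ins_last τ c (Nat.lt_succ_self M) hJlt
        have h1 := ZMod.val_lt (τ.color ⟨M, Nat.lt_succ_self M⟩)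
        have h2 := ZMod.val_lt c
        have hp := NeZero.pos p
        rw [if_congr (ceqtop_iff (τ.color ⟨M, Nat.lt_succ_self M⟩)) rfl rfl,
          if_congr (ceqtop_iff c) rfl rfl] at key
        split_ifs at key <;> omega
      · have hJm : J' < M + 1 := by omega
        have key := desc_ins_midpos τ c J' hlt hJlt hJm
        have hne := kv'_ne τ J' (by omega)
        by_cases hb : kvCP' τ (J' + 1) < kvCP' τ J'
        · have hle := kv'_le_of_lt τ hlt hJm hb
          rw [if_pos hb] at key
          split_ifs at key <;> omega
        · have hlt2 : kvCP' τ J' < kvCP' τ (J' + 1) := by omega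
          have hle := kv'_le_of_lt τ hJm hlt hlt2
          rw [if_neg hb] at key
          split_ifs at key <;> omega

/-! ### total sum over all insertions -/

def Dfn (τ : ColoredPerm p m) (i : ℕ) : ℕ :=
  if h : i < m then (τ.color ⟨i, h⟩).val else 0

lemma Dfn_pos (τ : ColoredPerm p m) {i : ℕ} (h : i < m) :
    Dfn τ i = (τ.color ⟨i, h⟩).val := dif_pos h

lemma total_sum (τ : ColoredPerm p m) :
    (∑ j : Fin (m + 1), ∑ c : ZMod p, descCP' (ins τ j c)) + p * descCP' τ
      = p * (m + 1) * descCP' τ + p * m + 1 := by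
  rcases m with _ | M
  · have h0 : (∑ j : Fin 1, ∑ c : ZMod p, descCP' (ins τ j c)) = 1 := by
      rw [Fin.sum_univ_one]
      exact sumc_empty τ 0
    rw [h0, descCP'_zero τ]
    simp
  · rw [Finset.sum_fin_eq_sum_range, Finset.sum_range_succ, Finset.sum_range_succ']
    have ht := descCP'_succ τ
    have e0 : (if h : (0 : ℕ) < M + 1 + 1
          then ∑ c : ZMod p, descCP' (ins τ ⟨0, h⟩ c) else 0)
          + Dfn τ 0
        = p * descCP' τ + p := by
      rw [dif_pos (show (0:ℕ) < M + 1 + 1 from Nat.succ_pos _),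
        Dfn_pos τ (Nat.succ_pos M)]
      exact sumc_mid0 τ (Nat.succ_pos M) _
    have eM : (if h : M + 1 < M + 1 + 1
          then ∑ c : ZMod p, descCP' (ins τ ⟨M + 1, h⟩ c) else 0)
          + p * (if τ.color ⟨M, Nat.lt_succ_self M⟩ = ((p - 1 : ℕ) : ZMod p) then 1 else 0)
        = p * descCP' τ + Dfn τ M + 1 := by
      rw [dif_pos (show M + 1 < M + 1 + 1 from Nat.lt_succ_self _),
        Dfn_pos τ (Nat.lt_succ_self M)]
      exact sumc_last τ (Nat.lt_succ_self M) _
    have emid : ∑ J ∈ Finset.range M,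
          ((if h : J + 1 < M + 1 + 1 then ∑ c : ZMod p, descCP' (ins τ ⟨J + 1, h⟩ c) else 0)
            + p * (if kvCP' τ (J + 1) < kvCP' τ J then 1 else 0)
            + Dfn τ (J + 1))
        = ∑ J ∈ Finset.range M, (p * descCP' τ + Dfn τ J + p) := by
      apply Finset.sum_congr rfl
      intro J hJ
      have hJM : J < M := Finset.mem_range.mp hJ
      rw [dif_pos (show J + 1 < M + 1 + 1 by omega), Dfn_pos τ (show J + 1 < M + 1 by omega),
        Dfn_pos τ (show J < M + 1 by omega)]
      exact sumc_midpos τ J (by omega) (by omega) (by omega)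
    rw [Finset.sum_add_distrib, Finset.sum_add_distrib] at emid
    rw [Finset.sum_add_distrib, Finset.sum_add_distrib, Finset.sum_const, Finset.sum_const,
      Finset.card_range, smul_eq_mul, smul_eq_mul] at emid
    rw [← Finset.mul_sum] at emid
    have htel : (∑ J ∈ Finset.range M, Dfn τ (J + 1)) + Dfn τ 0
        = (∑ J ∈ Finset.range M, Dfn τ J) + Dfn τ M := by
      have h1 := Finset.sum_range_succ' (Dfn τ) M
      have h2 := Finset.sum_range_succ (Dfn τ) M
      omega
    have hprod1 : p * (M + 1 + 1) * descCP' τ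
        = M * (p * descCP' τ) + p * descCP' τ + p * descCP' τ := by ring
    have hprod2 : p * (M + 1) = M * p + p := by ring
    have hsb : p * descCP' τ = p * (∑ i ∈ Finset.range M,
          if kvCP' τ (i + 1) < kvCP' τ i then 1 else 0)
        + p * (if τ.color ⟨M, Nat.lt_succ_self M⟩ = ((p - 1 : ℕ) : ZMod p) then 1 else 0) := by
      rw [ht]; ring
    omega

/-! ### fiber count -/

lemma desc_le (τ : ColoredPerm p m) : descCP' τ ≤ m := by
  rcases m with _ | M
  · rw [descCP'_zero]
  · rw [descCP'_succ]
    have h1 : ∑ i ∈ Finset.range M, (if kvCP' τ (i + 1) < kvCP' τ i then 1 else 0)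
        ≤ ∑ i ∈ Finset.range M, 1 :=
      Finset.sum_le_sum (fun i _ => by split_ifs <;> omega)
    rw [Finset.sum_const, Finset.card_range, smul_eq_mul, mul_one] at h1
    split_ifs <;> omega

lemma fiber_card (τ : ColoredPerm p m) (k : ℕ) :
    ((Finset.univ : Finset (Fin (m + 1) × ZMod p)).filter
        (fun x => descCP' (ins τ x.1 x.2) = k)).card
      = if k = descCP' τ then p * descCP' τ + p - 1
        else if k = descCP' τ + 1 then p * (m - descCP' τ) + 1 else 0 := by
  classical
  set t := descCP' τ with hT
  have ht : t ≤ m := desc_le τ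
  have hp := NeZero.pos p
  set s0 := (Finset.univ : Finset (Fin (m + 1) × ZMod p)).filter
    (fun x => descCP' (ins τ x.1 x.2) = t) with hs0
  set s1 := (Finset.univ : Finset (Fin (m + 1) × ZMod p)).filter
    (fun x => descCP' (ins τ x.1 x.2) = t + 1) with hs1
  have hdisj : Disjoint s0 s1 := by
    rw [Finset.disjoint_left]
    intro x hx0 hx1
    rw [hs0, Finset.mem_filter] at hx0
    rw [hs1, Finset.mem_filter] at hx1
    omega
  have hunion : s0 ∪ s1 = Finset.univ := by
    ext x
    simp only [hs0, hs1, Finset.mem_union, Finset.mem_filter, Finset.mem_univ, true_and,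
      iff_true]
    exact desc_ins_mem τ x.1 x.2
  have hcard : s0.card + s1.card = (m + 1) * p := by
    rw [← Finset.card_union_of_disjoint hdisj, hunion, Finset.card_univ, Fintype.card_prod,
      Fintype.card_fin, ZMod.card]
  have hS : ∑ x : Fin (m + 1) × ZMod p, descCP' (ins τ x.1 x.2)
      = t * s0.card + (t + 1) * s1.card := by
    rw [show (Finset.univ : Finset (Fin (m + 1) × ZMod p)) = s0 ∪ s1 from hunion.symm,
      Finset.sum_union hdisj]
    have h0 : ∑ x ∈ s0, descCP' (ins τ x.1 x.2) = ∑ x ∈ s0, t :=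
      Finset.sum_congr rfl (fun x hx => by
        rw [hs0, Finset.mem_filter] at hx; exact hx.2)
    have h1 : ∑ x ∈ s1, descCP' (ins τ x.1 x.2) = ∑ x ∈ s1, (t + 1) :=
      Finset.sum_congr rfl (fun x hx => by
        rw [hs1, Finset.mem_filter] at hx; exact hx.2)
    rw [h0, h1, Finset.sum_const, Finset.sum_const, smul_eq_mul, smul_eq_mul]
    ring
  have hS2 : (∑ x : Fin (m + 1) × ZMod p, descCP' (ins τ x.1 x.2)) + p * t
      = p * (m + 1) * t + p * m + 1 := by
    rw [Fintype.sum_prod_type]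
    exact total_sum τ
  have hexp : t * s0.card + (t + 1) * s1.card = t * (s0.card + s1.card) + s1.card := by ring
  have hexp2 : t * ((m + 1) * p) = p * (m + 1) * t := by ring
  have hmt : p * (m - t) + p * t = p * m := by
    rw [← Nat.mul_add, Nat.sub_add_cancel ht]
  have hexp3 : (m + 1) * p = p * m + p := by ring
  have hexp4 : t * (s0.card + s1.card) = t * ((m + 1) * p) := by rw [hcard]
  have hN1 : s1.card = p * (m - t) + 1 := by omega
  have hN0 : s0.card = p * t + p - 1 := by omega
  by_cases hk1 : k = t
  · rw [if_pos hk1, ← hN0, hs0, hk1]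
  · rw [if_neg hk1]
    by_cases hk2 : k = t + 1
    · rw [if_pos hk2, ← hN1, hs1, hk2]
    · rw [if_neg hk2]
      rw [Finset.card_eq_zero, Finset.filter_eq_empty_iff]
      intro x _
      rcases desc_ins_mem τ x.1 x.2 with h | h <;> omega

/-! ### the recursion -/

lemma Fcount_eq (n k : ℕ) : Fcount p n k
    = ((Finset.univ : Finset (ColoredPerm p n)).filter (fun τ => descCP' τ = k)).card := by
  rw [Fcount, Nat.card_eq_fintype_card, Fintype.card_subtype]

theorem part1 (m k : ℕ) (hk : 1 ≤ k) :
    Fcount p (m + 1) k = (p * k + p - 1) * Fcount p m k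
      + (p * ((m + 1) - k) + 1) * Fcount p m (k - 1) := by
  classical
  have hbij := ins_bijective (p := p) (m := m)
  have hA : Fcount p (m + 1) k
      = ∑ τ : ColoredPerm p m,
          Fintype.card {x : Fin (m + 1) × ZMod p // descCP' (ins τ x.1 x.2) = k} := by
    rw [Fcount]
    rw [Nat.card_congr ((Equiv.subtypeEquiv
      (p := fun x : ColoredPerm p m × Fin (m + 1) × ZMod p => descCP' (ins x.1 x.2.1 x.2.2) = k)
      (q := fun σ : ColoredPerm p (m + 1) => descCP' σ = k)
      (Equiv.ofBijective _ hbij) (fun x => Iff.rfl))).symm]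
    rw [Nat.card_eq_fintype_card]
    rw [Fintype.card_congr (Equiv.subtypeProdEquivSigmaSubtype
      (fun (τ : ColoredPerm p m) (x : Fin (m + 1) × ZMod p) => descCP' (ins τ x.1 x.2) = k))]
    exact Fintype.card_sigma
  have hB : ∀ τ : ColoredPerm p m,
      Fintype.card {x : Fin (m + 1) × ZMod p // descCP' (ins τ x.1 x.2) = k}
        = if k = descCP' τ then p * descCP' τ + p - 1
          else if k = descCP' τ + 1 then p * (m - descCP' τ) + 1 else 0 := fun τ => by
    rw [Fintype.card_subtype]
    exact fiber_card τ k
  rw [hA, Finset.sum_congr rfl (fun τ _ => hB τ)]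
  rw [← Finset.sum_filter_add_sum_filter_not Finset.univ (fun τ => descCP' τ = k)]
  have hone : ∑ τ ∈ Finset.univ.filter (fun τ : ColoredPerm p m => descCP' τ = k),
        (if k = descCP' τ then p * descCP' τ + p - 1
          else if k = descCP' τ + 1 then p * (m - descCP' τ) + 1 else 0)
      = (p * k + p - 1) * Fcount p m k := by
    have hval : ∀ τ ∈ Finset.univ.filter (fun τ : ColoredPerm p m => descCP' τ = k),
        (if k = descCP' τ then p * descCP' τ + p - 1
          else if k = descCP' τ + 1 then p * (m - descCP' τ) + 1 else 0)
          = p * k + p - 1 := by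
      intro τ hτ
      rw [Finset.mem_filter] at hτ
      rw [if_pos hτ.2.symm, hτ.2]
    rw [Finset.sum_congr rfl hval, Finset.sum_const, smul_eq_mul, ← Fcount_eq m k]
    exact mul_comm _ _
  have htwo : ∑ τ ∈ Finset.univ.filter (fun τ : ColoredPerm p m => ¬descCP' τ = k),
        (if k = descCP' τ then p * descCP' τ + p - 1
          else if k = descCP' τ + 1 then p * (m - descCP' τ) + 1 else 0)
      = (p * ((m + 1) - k) + 1) * Fcount p m (k - 1) := by
    rw [← Finset.sum_filter_add_sum_filter_not
      (Finset.univ.filter (fun τ : ColoredPerm p m => ¬descCP' τ = k))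
      (fun τ => descCP' τ = k - 1)]
    have hset : (Finset.univ.filter (fun τ : ColoredPerm p m => ¬descCP' τ = k)).filter
          (fun τ => descCP' τ = k - 1)
        = Finset.univ.filter (fun τ : ColoredPerm p m => descCP' τ = k - 1) := by
      ext τ
      simp only [Finset.mem_filter, Finset.mem_univ, true_and]
      omega
    have ha : ∑ τ ∈ (Finset.univ.filter (fun τ : ColoredPerm p m => ¬descCP' τ = k)).filter
          (fun τ => descCP' τ = k - 1),
          (if k = descCP' τ then p * descCP' τ + p - 1
            else if k = descCP' τ + 1 then p * (m - descCP' τ) + 1 else 0)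
        = (p * ((m + 1) - k) + 1) * Fcount p m (k - 1) := by
      rw [hset]
      have hval : ∀ τ ∈ Finset.univ.filter (fun τ : ColoredPerm p m => descCP' τ = k - 1),
          (if k = descCP' τ then p * descCP' τ + p - 1
            else if k = descCP' τ + 1 then p * (m - descCP' τ) + 1 else 0)
            = p * ((m + 1) - k) + 1 := by
        intro τ hτ
        rw [Finset.mem_filter] at hτ
        rw [if_neg (by omega), if_pos (by omega), hτ.2,
          show m - (k - 1) = (m + 1) - k by omega]
      rw [Finset.sum_congr rfl hval, Finset.sum_const, smul_eq_mul, ← Fcount_eq m (k - 1)]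
      exact mul_comm _ _
    have hb : ∑ τ ∈ (Finset.univ.filter (fun τ : ColoredPerm p m => ¬descCP' τ = k)).filter
          (fun τ => ¬descCP' τ = k - 1),
          (if k = descCP' τ then p * descCP' τ + p - 1
            else if k = descCP' τ + 1 then p * (m - descCP' τ) + 1 else 0) = 0 := by
      apply Finset.sum_eq_zero
      intro τ hτ
      rw [Finset.mem_filter, Finset.mem_filter] at hτ
      rw [if_neg (by omega), if_neg (by omega)]
    rw [ha, hb, Nat.add_zero]
  rw [hone, htwo]

end DashProof

/-- `F_p(n,k) = (pk+p-1)·F_p(n-1,k) + (p(n-k)+1)·F_p(n-1,k-1)`, and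
`F_p(n,k) = E_p(n,n-k)` for `p ≠ 1`. -/
theorem dash_descent_statistics (p : ℕ) [NeZero p] (hp : 1 ≤ p) :
    (∀ n k : ℕ, 1 ≤ n → 1 ≤ k →
        Fcount p n k =
          (p * k + p - 1) * Fcount p (n - 1) k
            + (p * (n - k) + 1) * Fcount p (n - 1) (k - 1)) ∧
      (p ≠ 1 → ∀ n k : ℕ, k ≤ n → Fcount p n k = Ecount p n (n - k)) := by
  constructor
  · intro n k hn hk
    obtain ⟨m, rfl⟩ : ∃ m, n = m + 1 := ⟨n - 1, by omega⟩
    have h := DashProof.part1 (p := p) m k hk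
    simpa using h
  · intro _ n k hk
    exact DashProof.part2 hk
end

section
/- Let b ≥ 2, n ≥ 1, p ≥ 1 with b ≡ 1 (mod p), and let P(i,j) = b^{-n} Σ_{r≥0} (-1)^r binom(n+1,r) binom(n + B(i,j) - br, n) · 1[B(i,j) - br ≥ 0], where B(i,j) = (j + 1/p)·b - (i + 1/p), be the transition matrix of the (b,n,p)-carries process on states {0,...,n}. Then ũ(i) := i + 1/p - (n+1)/2 defines a right eigenvector of P with eigenvalue 1/b, i.e., Σ_j P(i,j)·ũ(j) = (1/b)·ũ(i) for all i. -/
set_option linter.constructorNameAsVariable false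
set_option maxHeartbeats 1000000

open Finset


def Ealt (d : ℕ) (f : ℕ → ℝ) : ℝ := ∑ k ∈ range (d + 1), (-1 : ℝ) ^ k * (d.choose k) * f k

lemma Ealt_succ (d : ℕ) (f : ℕ → ℝ) :
    Ealt (d + 1) f = Ealt d f - Ealt d (fun k => f (k + 1)) := by
  have h1 : Ealt (d + 1) f
      = ∑ k ∈ range (d + 1), (-1 : ℝ) ^ (k+1) * ((d+1).choose (k+1)) * f (k+1)
        + (-1 : ℝ) ^ 0 * ((d+1).choose 0) * f 0 := by
    rw [Ealt, Finset.sum_range_succ']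
  have h3 : ∑ k ∈ range (d + 1), (-1 : ℝ) ^ k * (d.choose (k+1)) * f (k+1)
      = f 0 - Ealt d f := by
    have e1 : Ealt d f = ∑ k ∈ range d, (-1 : ℝ) ^ (k+1) * (d.choose (k+1)) * f (k+1)
        + (-1 : ℝ) ^ 0 * (d.choose 0) * f 0 := by rw [Ealt, Finset.sum_range_succ']
    have e2 : ∑ k ∈ range d, (-1:ℝ)^(k+1) * (d.choose (k+1)) * f (k+1)
        = -∑ k ∈ range d, (-1:ℝ)^k * (d.choose (k+1)) * f (k+1) := by
      rw [← Finset.sum_neg_distrib]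
      exact Finset.sum_congr rfl (fun k _ => by ring)
    rw [Finset.sum_range_succ, Nat.choose_succ_self, e1, e2]
    simp [Nat.choose_zero_right]
  have h4 : ∑ k ∈ range (d + 1), (-1 : ℝ) ^ (k+1) * ((d+1).choose (k+1)) * f (k+1)
      = -Ealt d (fun k => f (k+1)) - (f 0 - Ealt d f) := by
    have : ∀ k ∈ range (d+1), (-1 : ℝ) ^ (k+1) * ((d+1).choose (k+1)) * f (k+1)
        = -((-1:ℝ)^k * (d.choose k) * f (k+1)) - (-1:ℝ)^k * (d.choose (k+1)) * f (k+1) := by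
      intro k _
      rw [Nat.choose_succ_succ]
      push_cast
      ring
    rw [Finset.sum_congr rfl this, Finset.sum_sub_distrib, Finset.sum_neg_distrib, h3]
    rfl
  rw [h1, h4]
  simp
  ring
lemma Ealt_congr {d : ℕ} {f g : ℕ → ℝ} (h : ∀ k, f k = g k) : Ealt d f = Ealt d g := by
  unfold Ealt; exact Finset.sum_congr rfl (fun k _ => by rw [h])

lemma Ealt_sum {d : ℕ} {s : Finset ℕ} (F : ℕ → ℕ → ℝ) :
    Ealt d (fun k => ∑ j ∈ s, F j k) = ∑ j ∈ s, Ealt d (F j) := by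
  unfold Ealt
  rw [Finset.sum_comm]
  exact Finset.sum_congr rfl (fun k _ => by rw [Finset.mul_sum])

lemma Ealt_add {d : ℕ} (f g : ℕ → ℝ) :
    Ealt d (fun k => f k + g k) = Ealt d f + Ealt d g := by
  unfold Ealt
  rw [← Finset.sum_add_distrib]
  exact Finset.sum_congr rfl (fun k _ => by ring)

lemma Ealt_const_mul {d : ℕ} (a : ℝ) (f : ℕ → ℝ) :
    Ealt d (fun k => a * f k) = a * Ealt d f := by
  unfold Ealt
  rw [Finset.mul_sum]
  exact Finset.sum_congr rfl (fun k _ => by ring)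
lemma Ealt_succ_pow (d j : ℕ) :
    Ealt (d+1) (fun m => (m:ℝ)^j)
      = Ealt d (fun m => (m:ℝ)^j)
        - ∑ t ∈ range (j+1), (j.choose t : ℝ) * Ealt d (fun m => (m:ℝ)^t) := by
  rw [Ealt_succ]
  congr 1
  calc Ealt d (fun k => ((k+1:ℕ):ℝ)^j)
      = Ealt d (fun k => ∑ t ∈ range (j+1), (j.choose t : ℝ) * (k:ℝ)^t) := by
        apply Ealt_congr
        intro k
        push_cast
        rw [add_pow]
        exact Finset.sum_congr rfl (fun t _ => by rw [one_pow]; ring)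
    _ = ∑ t ∈ range (j+1), Ealt d (fun m => (j.choose t : ℝ) * (m:ℝ)^t) :=
        Ealt_sum (fun t m => (j.choose t : ℝ) * (m:ℝ)^t)
    _ = ∑ t ∈ range (j+1), (j.choose t : ℝ) * Ealt d (fun m => (m:ℝ)^t) :=
        Finset.sum_congr rfl (fun t _ => Ealt_const_mul _ _)

lemma Ealt_pow_lt : ∀ d : ℕ, ∀ j < d, Ealt d (fun m => (m:ℝ)^j) = 0 := by
  intro d
  induction d with
  | zero => omega
  | succ d ih =>
    intro j hj
    rw [Ealt_succ_pow, Finset.sum_range_succ, Nat.choose_self]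
    have hz : ∀ t ∈ range j, (j.choose t : ℝ) * Ealt d (fun m => (m:ℝ)^t) = 0 := by
      intro t ht
      rw [ih t (by simp at ht; omega)]; ring
    rw [Finset.sum_congr rfl hz]
    simp

lemma Ealt_pow_self : ∀ d : ℕ, Ealt d (fun m => (m:ℝ)^d) = (-1)^d * (d.factorial) := by
  intro d
  induction d with
  | zero => simp [Ealt]
  | succ d ih =>
    rw [Ealt_succ_pow, Finset.sum_range_succ, Finset.sum_range_succ, Nat.choose_self,
      Nat.choose_succ_self_right]
    have hz : ∀ t ∈ range d, ((d+1).choose t : ℝ) * Ealt d (fun m => (m:ℝ)^t) = 0 := by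
      intro t ht
      rw [Ealt_pow_lt d t (by simp at ht; omega)]; ring
    rw [Finset.sum_congr rfl hz, ih]
    rw [Nat.factorial_succ]
    push_cast
    simp
    ring

lemma Ealt_pow_succ : ∀ d : ℕ, Ealt d (fun m => (m:ℝ)^(d+1))
    = (-1)^d * (d.factorial) * (d*(d+1)/2) := by
  intro d
  induction d with
  | zero => simp [Ealt]
  | succ d ih =>
    rw [Ealt_succ_pow, Finset.sum_range_succ, Finset.sum_range_succ, Finset.sum_range_succ,
      Nat.choose_self, Nat.choose_succ_self_right]
    have hz : ∀ t ∈ range d, ((d+2).choose t : ℝ) * Ealt d (fun m => (m:ℝ)^t) = 0 := by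
      intro t ht
      rw [Ealt_pow_lt d t (by simp at ht; omega)]; ring
    rw [Finset.sum_congr rfl hz, ih, Ealt_pow_self]
    have h2 : ((d+2).choose d : ℝ) = (d+1)*(d+2)/2 := by
      have e1 : (d+2).choose d = (d+2)*(d+1)/2 := by
        have := Nat.choose_symm (n := d+2) (k := 2) (by omega)
        rw [(by omega : d+2-2 = d)] at this
        rw [this, Nat.choose_two_right, Nat.succ_sub_one]
      have e2 : (2:ℕ) ∣ (d+2)*(d+1) := by
        rcases Nat.even_mul_succ_self (d+1) with ⟨t, ht⟩
        rw [mul_comm] at ht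
        exact ⟨t, by rw [ht]; omega⟩
      rw [e1, Nat.cast_div e2 (by norm_num)]
      push_cast
      ring
    rw [h2, Nat.factorial_succ]
    push_cast
    simp
    ring
lemma gexp (m : ℕ) (b w : ℝ) :
    ∃ c : ℕ → ℝ, c (m+1) = b^(m+1) ∧
      c m = ((m+1)*w + (m+1)*(m+2)/2) * b^m ∧
      (∀ j, m+2 ≤ j → c j = 0) ∧
      (∀ k : ℕ, ∏ t ∈ range (m+1), ((k:ℝ)*b + w + (t+1))
        = ∑ j ∈ range (m+2), c j * (k:ℝ)^j) := by
  induction m with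
  | zero =>
    refine ⟨fun j => if j = 1 then b else if j = 0 then w + 1 else 0, by norm_num, by norm_num,
      fun j hj => by simp [show ¬ j = 1 by omega, show ¬ j = 0 by omega], fun k => ?_⟩
    simp [Finset.sum_range_succ]
    ring
  | succ m ih =>
    obtain ⟨c, htop, hsub, hhi, hsum⟩ := ih
    refine ⟨fun j => (w + (m+2)) * c j + b * (if j = 0 then 0 else c (j-1)), ?_, ?_, ?_, ?_⟩
    · simp [hhi (m+2) le_rfl, htop]
      ring
    · have : m + 1 - 1 = m := by omega
      simp [htop, hsub, this]
      ring
    · intro j hj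
      have h1 : c j = 0 := hhi j (by omega)
      have h2 : ¬ j = 0 := by omega
      simp [h1, h2, hhi (j-1) (by omega)]
    · intro k
      rw [Finset.prod_range_succ, hsum k]
      have e1 : ∑ j ∈ range (m+3), ((w + (m+2)) * c j + b * (if j = 0 then 0 else c (j-1))) * (k:ℝ)^j
          = (w+(m+2)) * ∑ j ∈ range (m+3), c j * (k:ℝ)^j
            + b * ∑ j ∈ range (m+3), (if j = 0 then 0 else c (j-1)) * (k:ℝ)^j := by
        rw [Finset.mul_sum, Finset.mul_sum, ← Finset.sum_add_distrib]
        exact Finset.sum_congr rfl (fun j _ => by ring)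
      have e2 : ∑ j ∈ range (m+3), c j * (k:ℝ)^j = ∑ j ∈ range (m+2), c j * (k:ℝ)^j := by
        rw [Finset.sum_range_succ, hhi (m+2) le_rfl]
        simp
      have e3 : ∑ j ∈ range (m+3), (if j = 0 then 0 else c (j-1)) * (k:ℝ)^j
          = (k:ℝ) * ∑ j ∈ range (m+2), c j * (k:ℝ)^j := by
        rw [Finset.sum_range_succ', Finset.mul_sum]
        simp
        exact Finset.sum_congr rfl (fun j _ => by ring)
      rw [e1, e2, e3]
      push_cast
      ring
lemma neg_one_pow_mul_self (j : ℕ) : (-1:ℝ)^j * (-1:ℝ)^j = 1 := by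
  rw [← mul_pow]; norm_num

lemma neg_one_pow_sub {n k : ℕ} (h : k ≤ n) : (-1:ℝ)^(n-k) = (-1)^n * (-1)^k := by
  calc (-1:ℝ)^(n-k) = (-1:ℝ)^(n-k) * ((-1:ℝ)^k * (-1:ℝ)^k) := by
        rw [neg_one_pow_mul_self, mul_one]
    _ = ((-1:ℝ)^(n-k) * (-1:ℝ)^k) * (-1:ℝ)^k := by ring
    _ = (-1:ℝ)^n * (-1:ℝ)^k := by rw [← pow_add, (by omega : n-k+k = n)]

lemma key (m : ℕ) (b w c : ℝ) :
    ∑ k ∈ range (m+2), (-1:ℝ)^(m+1-k) *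
        (((k:ℝ) + c) * ((m+1).choose (m+1-k) : ℝ) - ((m:ℝ)+2) * ((m).choose (m+1-k) : ℝ)) *
        (∏ t ∈ range (m+1), ((k:ℝ)*b + w + ((t:ℝ)+1)))
      = ((m+1).factorial : ℝ) * b^m * (b*c - w - ((m:ℝ)+2)*(b+1)/2) := by
  set h : ℕ → ℝ := fun k => ∏ t ∈ range (m+1), ((k:ℝ)*b + w + ((t:ℝ)+1)) with hh
  have split : ∑ k ∈ range (m+2), (-1:ℝ)^(m+1-k) *
        (((k:ℝ) + c) * ((m+1).choose (m+1-k) : ℝ) - ((m:ℝ)+2) * ((m).choose (m+1-k) : ℝ)) * h k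
      = (∑ k ∈ range (m+2), (-1:ℝ)^(m+1-k) * ((m+1).choose (m+1-k) : ℝ) * (((k:ℝ) + c) * h k))
        - ((m:ℝ)+2) * ∑ k ∈ range (m+2), (-1:ℝ)^(m+1-k) * ((m).choose (m+1-k) : ℝ) * h k := by
    rw [Finset.mul_sum, ← Finset.sum_sub_distrib]
    exact Finset.sum_congr rfl (fun k _ => by ring)
  have sumA : ∑ k ∈ range (m+2), (-1:ℝ)^(m+1-k) * ((m+1).choose (m+1-k) : ℝ) * (((k:ℝ) + c) * h k)
      = (-1:ℝ)^(m+1) * Ealt (m+1) (fun k => ((k:ℝ) + c) * h k) := by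
    rw [Ealt, Finset.mul_sum]
    apply Finset.sum_congr rfl
    intro k hk
    have hk' : k ≤ m+1 := by simp at hk; omega
    rw [neg_one_pow_sub hk', Nat.choose_symm hk']
    ring
  have sumB : ∑ k ∈ range (m+2), (-1:ℝ)^(m+1-k) * ((m).choose (m+1-k) : ℝ) * h k
      = (-1:ℝ)^m * Ealt m (fun k => h (k+1)) := by
    rw [Finset.sum_range_succ']
    have h0 : (-1:ℝ)^(m+1-0) * ((m).choose (m+1-0) : ℝ) * h 0 = 0 := by
      rw [Nat.choose_eq_zero_of_lt (by omega)]
      simp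
    rw [h0, add_zero, Ealt, Finset.mul_sum]
    apply Finset.sum_congr rfl
    intro k hk
    have hk' : k ≤ m := by simp at hk; omega
    have e1 : m + 1 - (k+1) = m - k := by omega
    rw [e1, neg_one_pow_sub hk', Nat.choose_symm hk']
    ring
  obtain ⟨c₁, hc₁top, hc₁m, hc₁hi, hc₁sum⟩ := gexp m b w
  obtain ⟨c₂, hc₂top, hc₂m, hc₂hi, hc₂sum⟩ := gexp m b (w + b)
  have evalA : Ealt (m+1) (fun k => ((k:ℝ) + c) * h k)
      = c₁ m * Ealt (m+1) (fun k => (k:ℝ)^(m+1))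
        + c₁ (m+1) * Ealt (m+1) (fun k => (k:ℝ)^(m+2))
        + c * c₁ (m+1) * Ealt (m+1) (fun k => (k:ℝ)^(m+1)) := by
    have step1 : Ealt (m+1) (fun k => ((k:ℝ) + c) * h k)
        = ∑ j ∈ range (m+2),
            (c₁ j * Ealt (m+1) (fun k => (k:ℝ)^(j+1)) + c * (c₁ j * Ealt (m+1) (fun k => (k:ℝ)^j))) := by
      rw [show (fun k : ℕ => ((k:ℝ) + c) * h k)
          = fun k : ℕ => ∑ j ∈ range (m+2), (c₁ j * (k:ℝ)^(j+1) + c * (c₁ j * (k:ℝ)^j)) from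
        funext (fun k : ℕ => by
          simp only [hh]
          rw [hc₁sum k, Finset.mul_sum]
          exact Finset.sum_congr rfl (fun j _ => by ring))]
      rw [Ealt_sum (fun j k => c₁ j * (k:ℝ)^(j+1) + c * (c₁ j * (k:ℝ)^j))]
      apply Finset.sum_congr rfl
      intro j _
      rw [Ealt_add, Ealt_const_mul, Ealt_const_mul, Ealt_const_mul]
    rw [step1, Finset.sum_range_succ, Finset.sum_range_succ]
    have hz : ∀ j ∈ range m,
        (c₁ j * Ealt (m+1) (fun k => (k:ℝ)^(j+1)) + c * (c₁ j * Ealt (m+1) (fun k => (k:ℝ)^j))) = 0 := by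
      intro j hj
      have hj' : j < m := by simpa using hj
      rw [Ealt_pow_lt (m+1) (j+1) (by omega), Ealt_pow_lt (m+1) j (by omega)]
      ring
    rw [Finset.sum_congr rfl hz, Finset.sum_const_zero,
      Ealt_pow_lt (m+1) m (by omega)]
    ring
  have evalB : Ealt m (fun k => h (k+1))
      = c₂ m * Ealt m (fun k => (k:ℝ)^m) + c₂ (m+1) * Ealt m (fun k => (k:ℝ)^(m+1)) := by
    have step1 : Ealt m (fun k => h (k+1))
        = ∑ j ∈ range (m+2), (c₂ j * Ealt m (fun k => (k:ℝ)^j)) := by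
      rw [show (fun k : ℕ => h (k+1)) = fun k : ℕ => ∑ j ∈ range (m+2), c₂ j * (k:ℝ)^j from
        funext (fun k : ℕ => by
          simp only [hh]
          rw [← hc₂sum k]
          apply Finset.prod_congr rfl
          intro t _
          push_cast
          ring)]
      rw [Ealt_sum (fun j k => c₂ j * (k:ℝ)^j)]
      exact Finset.sum_congr rfl (fun j _ => Ealt_const_mul _ _)
    rw [step1, Finset.sum_range_succ, Finset.sum_range_succ]
    have hz : ∀ j ∈ range m, c₂ j * Ealt m (fun k => (k:ℝ)^j) = 0 := by
      intro j hj
      have hj' : j < m := by simpa using hj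
      rw [Ealt_pow_lt m j (by omega)]
      ring
    rw [Finset.sum_congr rfl hz, Finset.sum_const_zero]
    ring
  rw [split, sumA, sumB, evalA, evalB, hc₁top, hc₁m, hc₂top, hc₂m,
    Ealt_pow_self (m+1), Ealt_pow_succ (m+1), Ealt_pow_self m, Ealt_pow_succ m]
  have s1 := neg_one_pow_mul_self (m+1)
  have s2 := neg_one_pow_mul_self m
  rw [Nat.factorial_succ]
  push_cast
  linear_combination
    ((((m:ℝ)+1)*w + ((m:ℝ)+1)*((m:ℝ)+2)/2) * b^m * ((((m:ℝ)+1) * (m.factorial:ℝ)))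
      + b^(m+1) * ((((m:ℝ)+1) * (m.factorial:ℝ)) * (((m:ℝ)+1)*(((m:ℝ)+1)+1)/2))
      + c * b^(m+1) * ((((m:ℝ)+1) * (m.factorial:ℝ)))) * s1
    - ((m:ℝ)+2) * ((((m:ℝ)+1)*(w+b) + ((m:ℝ)+1)*((m:ℝ)+2)/2) * b^m * (m.factorial:ℝ)
      + b^(m+1) * ((m.factorial:ℝ) * ((m:ℝ)*((m:ℝ)+1)/2))) * s2
lemma psc (N : ℕ) (x : ℝ) : ∀ m : ℕ,
    ∑ s ∈ range (m+1), (-1:ℝ)^s * ((N+2).choose s : ℝ) * (x + s)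
      = (-1:ℝ)^m * ((x + N + 2) * ((N+1).choose m : ℝ) - ((N:ℝ)+2) * ((N).choose m : ℝ)) := by
  intro m
  induction m with
  | zero => simp
  | succ m ih =>
    rw [Finset.sum_range_succ, ih]
    have p1 : (((N+2)).choose (m+1) : ℝ) = ((N+1).choose m : ℝ) + ((N+1).choose (m+1) : ℝ) := by
      rw [Nat.choose_succ_succ (N+1) m]; push_cast; ring
    have p2 : (((N+1)).choose (m+1) : ℝ) = ((N).choose m : ℝ) + ((N).choose (m+1) : ℝ) := by
      rw [Nat.choose_succ_succ N m]; push_cast; ring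
    have p3 : ((N:ℝ)+2) * ((N+1).choose m : ℝ) = ((m:ℝ)+1) * ((N+2).choose (m+1) : ℝ) := by
      have := Nat.add_one_mul_choose_eq (N+1) m
      have := congrArg (fun z : ℕ => (z : ℝ)) this
      push_cast at this
      linarith [this]
    push_cast
    linear_combination (-(-1:ℝ)^m * x) * p1 + ((-1:ℝ)^m * ((N:ℝ)+2)) * p2 + ((-1:ℝ)^m) * p3
lemma choose_fact (M : ℕ) : ∀ n : ℕ,
    (((n+M).choose n : ℕ) : ℝ) * (n.factorial : ℝ) = ∏ t ∈ range n, ((M:ℝ) + t + 1) := by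
  intro n
  induction n with
  | zero => simp
  | succ n ih =>
    rw [Finset.prod_range_succ, (show n+1+M = n+M+1 from by omega), Nat.factorial_succ]
    have keyR : ((n+M+1 : ℕ) : ℝ) * (((n+M).choose n : ℕ) : ℝ)
        = (((n+M+1).choose (n+1) : ℕ) : ℝ) * ((n:ℝ)+1) := by
      have h := Nat.add_one_mul_choose_eq (n+M) n
      have h2 := congrArg (fun z : ℕ => (z : ℝ)) h
      push_cast at h2 ⊢
      linarith [h2]
    push_cast at keyR ⊢
    linear_combination ((M:ℝ)+(n:ℝ)+1)*ih - (n.factorial:ℝ)*keyR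

lemma Fprod (n : ℕ) (X : ℤ) (hX : -(n:ℤ) ≤ X) :
    (if 0 ≤ X then (((n + X.toNat).choose n : ℕ) : ℝ) else 0) * (n.factorial : ℝ)
      = ∏ t ∈ range n, ((X:ℝ) + (t:ℝ) + 1) := by
  by_cases h0 : 0 ≤ X
  · rw [if_pos h0, choose_fact X.toNat n]
    apply Finset.prod_congr rfl
    intro t _
    have : ((X.toNat : ℕ) : ℝ) = ((X : ℤ) : ℝ) := by
      rw [← Int.cast_natCast, Int.toNat_of_nonneg h0]
    rw [this]
  · rw [if_neg h0, zero_mul]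
    symm
    apply Finset.prod_eq_zero (i := (-(X+1)).toNat)
    · simp only [Finset.mem_range]
      omega
    · have : (((-(X+1)).toNat : ℕ) : ℝ) = ((-(X+1) : ℤ) : ℝ) := by
        rw [← Int.cast_natCast, Int.toNat_of_nonneg (by omega)]
      rw [this]
      push_cast
      ring



/-- `B(i,j) = (j + 1/p)·b - (i + 1/p) = jb - i + (b-1)/p`, an integer since
`b ≡ 1 mod p`. -/
def Bplus (b p i j : ℕ) : ℤ := (j : ℤ) * b - i + ((b - 1) / p : ℕ)

/-- Transition matrix of the `(b,n,p)`-carries process on `{0,...,n}`: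
`P(i,j) = b^{-n} Σ_{r ≥ 0} (-1)^r binom(n+1,r) binom(n+B(i,j)-br, n)·1[B(i,j)-br ≥ 0]`
(terms with `r > n+1` vanish since `binom(n+1,r) = 0`). -/
noncomputable def carriesP (b p n : ℕ) (i j : ℕ) : ℝ :=
  (b : ℝ) ^ (-(n : ℤ)) *
    ∑ r ∈ Finset.range (n + 2),
      (-1 : ℝ) ^ r * ((n + 1).choose r : ℝ) *
        (if 0 ≤ Bplus b p i j - b * r
          then (((n + (Bplus b p i j - b * r)).toNat.choose n : ℕ) : ℝ) else 0)

/-- `ũ(i) = i + 1/p - (n+1)/2` is a right eigenvector of the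
`(b,n,p)`-carries transition matrix with eigenvalue `1/b`. -/
theorem carriesP_right_eigenvector_one (b p n : ℕ) (hb : 2 ≤ b) (hn : 1 ≤ n)
    (hp : 1 ≤ p) (hmod : b ≡ 1 [MOD p]) :
    ∀ i ≤ n,
      ∑ j ∈ Finset.range (n + 1),
          carriesP b p n i j * ((j : ℝ) + 1 / p - ((n : ℝ) + 1) / 2) =
        (1 / b) * ((i : ℝ) + 1 / p - ((n : ℝ) + 1) / 2) := by

  obtain ⟨N, rfl⟩ : ∃ N, n = N + 1 := ⟨n - 1, by omega⟩
  intro i hi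
  have hb0 : (b:ℝ) ≠ 0 := by positivity
  have hp0 : (p:ℝ) ≠ 0 := by positivity
  have hdvd : p ∣ b - 1 := (Nat.modEq_iff_dvd' (by omega)).mp hmod.symm
  simp only [carriesP, Bplus]
  set q : ℕ := (b - 1) / p with hqdef
  have hq : p * q = b - 1 := Nat.mul_div_cancel' hdvd
  have hqb : q ≤ b - 1 := hqdef ▸ Nat.div_le_self _ _
  have hqR : (p:ℝ) * (q:ℝ) = (b:ℝ) - 1 := by
    have h2 := congrArg (fun z : ℕ => (z : ℝ)) hq
    push_cast [Nat.cast_sub (by omega : 1 ≤ b)] at h2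
    exact h2
  have hbq : (b:ℝ) * (1/p) - (q:ℝ) = 1/p := by
    field_simp
    linear_combination -hqR
  -- the bounded-coefficient function
  set F : ℤ → ℝ := fun X => if 0 ≤ X then (((N + 1 + X.toNat).choose (N+1) : ℕ) : ℝ) else 0
    with hF
  set uu : ℕ → ℝ := fun j => (j:ℝ) + 1/p - ((N:ℝ)+2)/2 with huu
  -- Step A : rewrite the inner sum over r
  have stepA : ∀ j ∈ range (N+2),
      ∑ r ∈ range (N+1+2), (-1:ℝ)^r * ((N+1+1).choose r : ℝ) *
          (if 0 ≤ (j:ℤ) * b - i + q - b * r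
            then ((((N+1:ℕ):ℤ) + ((j:ℤ) * b - i + q - b * r)).toNat.choose (N+1) : ℝ) else 0)
        = ∑ k ∈ range (N+2),
            (if k ≤ j then (-1:ℝ)^(j-k) * ((N+2).choose (j-k) : ℝ) * F ((k:ℤ)*b - i + q) else 0) := by
    intro j hj
    have hjn : j ≤ N+1 := by simp at hj; omega
    have hqbZ : (q:ℤ) ≤ (b:ℤ) - 1 := by
      have : (q:ℤ) ≤ ((b-1 : ℕ) : ℤ) := by exact_mod_cast hqb
      omega
    -- restrict the sum to r ≤ j
    have res : ∑ r ∈ range (N+1+2), (-1:ℝ)^r * ((N+1+1).choose r : ℝ) *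
          (if 0 ≤ (j:ℤ) * b - i + q - b * r
            then ((((N+1:ℕ):ℤ) + ((j:ℤ) * b - i + q - b * r)).toNat.choose (N+1) : ℝ) else 0)
        = ∑ r ∈ range (j+1), (-1:ℝ)^r * ((N+1+1).choose r : ℝ) *
          (if 0 ≤ (j:ℤ) * b - i + q - b * r
            then ((((N+1:ℕ):ℤ) + ((j:ℤ) * b - i + q - b * r)).toNat.choose (N+1) : ℝ) else 0) := by
      symm
      apply Finset.sum_subset
      · intro x hx; simp at hx ⊢; omega
      · intro r hr hr'
        have hrj : j + 1 ≤ r := by simp at hr'; omega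
        have hneg : ¬ (0 ≤ (j:ℤ) * b - i + q - b * r) := by
          have h1 : (j:ℤ) - r ≤ -1 := by
            have : (j:ℤ) + 1 ≤ r := by exact_mod_cast hrj
            omega
          have h2 : (b:ℤ) * ((j:ℤ) - r) ≤ (b:ℤ) * (-1) :=
            mul_le_mul_of_nonneg_left h1 (by positivity)
          have h3 : (j:ℤ) * b - b * r = b * ((j:ℤ) - r) := by ring
          omega
        rw [if_neg hneg, mul_zero]
    rw [res]
    -- reflect the sum
    have refl : ∑ r ∈ range (j+1), (-1:ℝ)^r * ((N+1+1).choose r : ℝ) *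
          (if 0 ≤ (j:ℤ) * b - i + q - b * r
            then ((((N+1:ℕ):ℤ) + ((j:ℤ) * b - i + q - b * r)).toNat.choose (N+1) : ℝ) else 0)
        = ∑ k ∈ range (j+1), (-1:ℝ)^(j-k) * ((N+2).choose (j-k) : ℝ) * F ((k:ℤ)*b - i + q) := by
      rw [← Finset.sum_range_reflect]
      apply Finset.sum_congr rfl
      intro k hk
      have hkj : k ≤ j := by simp at hk; omega
      have e0 : j + 1 - 1 - k = j - k := by omega
      rw [e0]
      have e1 : (j:ℤ) * b - i + q - b * ((j - k : ℕ) : ℤ) = (k:ℤ)*b - i + q := by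
        have : ((j - k : ℕ) : ℤ) = (j:ℤ) - k := by
          push_cast [Nat.cast_sub hkj]; ring
        rw [this]; ring
      rw [e1]
      congr 1
      rw [hF]
      simp only []
      by_cases hpos : 0 ≤ (k:ℤ)*b - i + q
      · rw [if_pos hpos, if_pos hpos]
        congr 2
        omega
      · rw [if_neg hpos, if_neg hpos]
    rw [refl]
    -- extend to range (N+2)
    symm
    rw [← Finset.sum_subset (show range (j+1) ⊆ range (N+2) by intro x hx; simp at hx ⊢; omega)
      (by intro k hk hk'; rw [if_neg (by simp at hk'; omega)])]
    apply Finset.sum_congr rfl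
    intro k hk
    rw [if_pos (by simp at hk; omega)]
  -- pull out the constant and normalise u
  have hgoal2 : ∀ j : ℕ, ((j:ℝ) + 1/p - (((N+1:ℕ):ℝ)+1)/2) = uu j := fun j => by
    rw [huu]; push_cast; ring
  rw [show ∀ (A : ℕ → ℝ), (∑ j ∈ range (N+1+1), ((b:ℝ)^(-((N+1:ℕ):ℤ)) * A j) *
      ((j:ℝ) + 1/p - (((N+1:ℕ):ℝ)+1)/2))
      = (b:ℝ)^(-((N+1:ℕ):ℤ)) * ∑ j ∈ range (N+2), A j * uu j from fun A => by
    rw [Finset.mul_sum]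
    exact Finset.sum_congr rfl (fun j _ => by rw [← hgoal2 j]; ring)]
  have main : ∑ j ∈ range (N+2),
      (∑ r ∈ range (N+1+2), (-1:ℝ)^r * ((N+1+1).choose r : ℝ) *
          (if 0 ≤ (j:ℤ) * b - i + q - b * r
            then ((((N+1:ℕ):ℤ) + ((j:ℤ) * b - i + q - b * r)).toNat.choose (N+1) : ℝ) else 0)) * uu j
      = (b:ℝ)^N * ((i:ℝ) + 1/p - ((N:ℝ)+2)/2) := by
    have st1 : ∑ j ∈ range (N+2),
        (∑ r ∈ range (N+1+2), (-1:ℝ)^r * ((N+1+1).choose r : ℝ) *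
          (if 0 ≤ (j:ℤ) * b - i + q - b * r
            then ((((N+1:ℕ):ℤ) + ((j:ℤ) * b - i + q - b * r)).toNat.choose (N+1) : ℝ) else 0)) * uu j
        = ∑ j ∈ range (N+2), ∑ k ∈ range (N+2),
            (if k ≤ j then (-1:ℝ)^(j-k) * ((N+2).choose (j-k) : ℝ) * F ((k:ℤ)*b - i + q) * uu j
              else 0) := by
      apply Finset.sum_congr rfl
      intro j hj
      rw [stepA j hj, Finset.sum_mul]
      apply Finset.sum_congr rfl
      intro k _
      rw [ite_mul, zero_mul]
    rw [st1, Finset.sum_comm]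
    have st2 : ∀ k ∈ range (N+2),
        (∑ j ∈ range (N+2),
          (if k ≤ j then (-1:ℝ)^(j-k) * ((N+2).choose (j-k) : ℝ) * F ((k:ℤ)*b - i + q) * uu j
            else 0))
        = F ((k:ℤ)*b - i + q) * ((-1:ℝ)^(N+1-k) *
            ((((k:ℝ) + 1/p - ((N:ℝ)+2)/2) + N + 2) * ((N+1).choose (N+1-k) : ℝ)
              - ((N:ℝ)+2) * ((N).choose (N+1-k) : ℝ))) := by
      intro k hk
      have hk' : k ≤ N+1 := by simp at hk; omega
      rw [← Finset.sum_filter]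
      have hfil : (range (N+2)).filter (fun j => k ≤ j) = Finset.Ico k (N+2) := by
        ext x; simp [Finset.mem_Ico]; omega
      rw [hfil, Finset.sum_Ico_eq_sum_range, (show N+2-k = (N+1-k)+1 from by omega)]
      have st3 : ∀ s ∈ range ((N+1-k)+1),
          (-1:ℝ)^(k+s-k) * ((N+2).choose (k+s-k) : ℝ) * F ((k:ℤ)*b - i + q) * uu (k+s)
          = F ((k:ℤ)*b - i + q) *
              ((-1:ℝ)^s * ((N+2).choose s : ℝ) * ((((k:ℝ) + 1/p - ((N:ℝ)+2)/2)) + s)) := by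
        intro s _
        rw [(show k+s-k = s from by omega), huu]
        push_cast
        ring
      rw [Finset.sum_congr rfl st3, ← Finset.mul_sum, psc N ((k:ℝ) + 1/p - ((N:ℝ)+2)/2) (N+1-k)]
    rw [Finset.sum_congr rfl st2]
    -- apply the key identity
    have hfac : ((N+1).factorial : ℝ) ≠ 0 := by positivity
    have prodF : ∀ k : ℕ, ∏ t ∈ range (N+1), ((k:ℝ)*b + ((q:ℝ)-(i:ℝ)) + ((t:ℝ)+1))
        = F ((k:ℤ)*b - i + q) * ((N+1).factorial : ℝ) := by
      intro k
      have h1 : (0:ℤ) ≤ (k:ℤ)*b := by positivity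
      have hX : -((N+1:ℕ):ℤ) ≤ (k:ℤ)*b - i + q := by
        have h2 : (i:ℤ) ≤ ((N+1:ℕ):ℤ) := by exact_mod_cast hi
        have hq2 : (0:ℤ) ≤ (q:ℤ) := by positivity
        omega
      have h3 := Fprod (N+1) ((k:ℤ)*b - i + q) hX
      rw [hF]
      simp only []
      rw [h3]
      apply Finset.prod_congr rfl
      intro t _
      push_cast
      ring
    have keyapp := key N (b:ℝ) ((q:ℝ)-(i:ℝ)) (1/(p:ℝ) + ((N:ℝ)+2)/2)
    have keyapp2 : ∑ k ∈ range (N+2),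
        (F ((k:ℤ)*b - i + q) * ((-1:ℝ)^(N+1-k) *
            ((((k:ℝ) + 1/p - ((N:ℝ)+2)/2) + N + 2) * ((N+1).choose (N+1-k) : ℝ)
              - ((N:ℝ)+2) * ((N).choose (N+1-k) : ℝ)))) * ((N+1).factorial : ℝ)
        = ((N+1).factorial : ℝ) * (b:ℝ)^N *
            ((b:ℝ)*(1/(p:ℝ) + ((N:ℝ)+2)/2) - ((q:ℝ)-(i:ℝ)) - ((N:ℝ)+2)*((b:ℝ)+1)/2) := by
      rw [← keyapp]
      apply Finset.sum_congr rfl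
      intro k _
      rw [prodF k]
      ring
    have keyapp3 : ∑ k ∈ range (N+2),
        F ((k:ℤ)*b - i + q) * ((-1:ℝ)^(N+1-k) *
            ((((k:ℝ) + 1/p - ((N:ℝ)+2)/2) + N + 2) * ((N+1).choose (N+1-k) : ℝ)
              - ((N:ℝ)+2) * ((N).choose (N+1-k) : ℝ)))
        = (b:ℝ)^N * ((b:ℝ)*(1/(p:ℝ) + ((N:ℝ)+2)/2) - ((q:ℝ)-(i:ℝ)) - ((N:ℝ)+2)*((b:ℝ)+1)/2) := by
      apply mul_right_cancel₀ hfac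
      rw [← Finset.sum_mul] at keyapp2
      rw [keyapp2]
      ring
    rw [keyapp3]
    have harith : (b:ℝ)*(1/(p:ℝ) + ((N:ℝ)+2)/2) - ((q:ℝ)-(i:ℝ)) - ((N:ℝ)+2)*((b:ℝ)+1)/2
        = (i:ℝ) + 1/p - ((N:ℝ)+2)/2 := by
      linear_combination hbq
    rw [harith]
  trans (b:ℝ)^(-((N+1:ℕ):ℤ)) * ((b:ℝ)^N * ((i:ℝ) + 1/p - ((N:ℝ)+2)/2))
  · exact congrArg (fun x => (b:ℝ)^(-((N+1:ℕ):ℤ)) * x) main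
  have hzp : (b:ℝ)^(-((N+1:ℕ):ℤ)) * (b:ℝ)^N = 1/b := by
    rw [zpow_neg, zpow_natCast, pow_succ]
    field_simp
  rw [← mul_assoc, hzp]
  push_cast
  ring
end
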